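/- arXiv:2106.06727 — 4 statements merged into one kernel-verified Lean document; each statement's English description precedes it below -/
import Mathlib

section
/- Every binary tree-child phylogenetic network is orchard, i.e., it can be reduced to a network consisting of a single edge (root with one leaf) by a sequence of cherry reductions and reticulated-cherry reductions. -/
/-- A (directed) phylogenetic-network-like graph on a finite set of
natural-number labelled vertices. -/
structure PNet where
  verts : Finset ℕ
  adj : ℕ → ℕ → Prop
  adjDec : DecidableRel adj
  adj_mem : ∀ u v, adj u v → u ∈ verts ∧ v ∈ verts

attribute [instance] PNet.adjDec

namespace PNet

/-- In-degree of a vertex. -/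
def indeg (N : PNet) (v : ℕ) : ℕ := (N.verts.filter fun u => N.adj u v).card

/-- Out-degree of a vertex. -/
def outdeg (N : PNet) (v : ℕ) : ℕ := (N.verts.filter fun w => N.adj v w).card

/-- A leaf is a vertex of out-degree 0. -/
def IsLeaf (N : PNet) (v : ℕ) : Prop := v ∈ N.verts ∧ N.outdeg v = 0

/-- A reticulation node is a vertex of in-degree 2. -/
def IsRetic (N : PNet) (v : ℕ) : Prop := v ∈ N.verts ∧ N.indeg v = 2

/-- A root is a vertex of in-degree 0. -/
def IsRoot (N : PNet) (v : ℕ) : Prop := v ∈ N.verts ∧ N.indeg v = 0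

/-- The digraph is acyclic. -/
def Acyclic (N : PNet) : Prop := ∀ v, ¬ Relation.TransGen N.adj v v

/-- A binary (rooted) phylogenetic network: acyclic, a root of in-degree 0 and
out-degree 2 from which all vertices are reachable, and every other vertex is a
tree node (in 1, out 2), a reticulation node (in 2, out 1) or a leaf (in 1, out 0). -/
def IsBinary (N : PNet) : Prop :=
  N.Acyclic ∧ ∃ ρ, N.IsRoot ρ ∧ N.outdeg ρ = 2 ∧
    (∀ v ∈ N.verts, Relation.ReflTransGen N.adj ρ v) ∧
    (∀ v ∈ N.verts, v ≠ ρ →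
      (N.indeg v = 1 ∧ N.outdeg v = 2) ∨ (N.indeg v = 2 ∧ N.outdeg v = 1) ∨
      (N.indeg v = 1 ∧ N.outdeg v = 0))

/-- Tree-child: every internal node has a child that is not a reticulation. -/
def TreeChild (N : PNet) : Prop :=
  ∀ v ∈ N.verts, N.outdeg v ≠ 0 → ∃ c, N.adj v c ∧ N.indeg c ≠ 2

/-- Stack-free: no edge joins two reticulation nodes. -/
def StackFree (N : PNet) : Prop :=
  ∀ u v, N.adj u v → ¬ (N.indeg u = 2 ∧ N.indeg v = 2)

end PNet

namespace PNet

/-- Cherry reduction: for a cherry `(x,y)` (two leaves with common parent `p`),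
delete `y` and suppress the resulting degree-two node `p` (when `p` is not the
root). -/
def CherryPick (N N' : PNet) : Prop :=
  ∃ x y p, x ≠ y ∧ N.IsLeaf x ∧ N.IsLeaf y ∧ N.adj p x ∧ N.adj p y ∧
    ((N.indeg p = 0 ∧ N'.verts = N.verts \ {y} ∧
        ∀ u v, N'.adj u v ↔ (N.adj u v ∧ v ≠ y)) ∨
     (∃ q, N.adj q p ∧ N'.verts = N.verts \ {y, p} ∧
        ∀ u v, N'.adj u v ↔
          ((N.adj u v ∧ u ≠ p ∧ v ≠ p ∧ v ≠ y) ∨ (u = q ∧ v = x))))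

/-- Reticulated cherry reduction: leaves `x` and `y`, the parent `w` of `x` is
a reticulation, and a tree node `p` is a common parent of `y` and `w`.  Delete
the hybrid edge `(p,w)` and suppress the resulting degree-two nodes. -/
def RetCherryPick (N N' : PNet) : Prop :=
  ∃ x y w p, x ≠ y ∧ N.IsLeaf x ∧ N.IsLeaf y ∧
    N.adj w x ∧ N.indeg w = 2 ∧ N.adj p w ∧ N.adj p y ∧ N.indeg p ≤ 1 ∧
    ∃ q', q' ≠ p ∧ N.adj q' w ∧
    ((N.indeg p = 0 ∧ N'.verts = N.verts \ {w} ∧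
        ∀ u v, N'.adj u v ↔
          ((N.adj u v ∧ u ≠ w ∧ v ≠ w) ∨ (u = q' ∧ v = x))) ∨
     (∃ q, N.adj q p ∧ N'.verts = N.verts \ {w, p} ∧
        ∀ u v, N'.adj u v ↔
          ((N.adj u v ∧ u ≠ w ∧ v ≠ w ∧ u ≠ p ∧ v ≠ p) ∨
            (u = q' ∧ v = x) ∨ (u = q ∧ v = y))))

/-- One cherry or reticulated-cherry reduction step. -/
def Reduce (N N' : PNet) : Prop := N.CherryPick N' ∨ N.RetCherryPick N'

/-- The trivial network: a root with a single leaf child. -/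
def IsTrivialNet (T : PNet) : Prop :=
  ∃ r l, r ≠ l ∧ T.verts = {r, l} ∧ ∀ u v, (T.adj u v ↔ (u = r ∧ v = l))

/-- Orchard: reducible to the trivial network by cherry and
reticulated-cherry reductions. -/
def Orchard (N : PNet) : Prop :=
  ∃ T, IsTrivialNet T ∧ Relation.ReflTransGen Reduce N T

end PNet

namespace PNet

variable {N : PNet} {u v w x y p q a b c : ℕ}

lemma not_adj_self (hac : N.Acyclic) (v : ℕ) : ¬ N.adj v v :=
  fun h => hac v (Relation.TransGen.single h)

lemma leaf_not_adj (hy : N.IsLeaf y) : ¬ N.adj y v := by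
  intro h
  have hv := (N.adj_mem _ _ h).2
  have : v ∈ N.verts.filter fun w => N.adj y w := Finset.mem_filter.2 ⟨hv, h⟩
  have := Finset.card_pos.2 ⟨v, this⟩
  rw [show (N.verts.filter fun w => N.adj y w).card = N.outdeg y from rfl, hy.2] at this
  exact absurd this (by simp)

lemma indeg_pos_of_adj (h : N.adj u v) : N.indeg v ≠ 0 := by
  intro h0
  have hu := (N.adj_mem _ _ h).1
  have : u ∈ N.verts.filter fun w => N.adj w v := Finset.mem_filter.2 ⟨hu, h⟩
  have := Finset.card_pos.2 ⟨u, this⟩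
  rw [show (N.verts.filter fun w => N.adj w v).card = N.indeg v from rfl, h0] at this
  exact absurd this (by simp)

lemma outdeg_pos_of_adj (h : N.adj u v) : N.outdeg u ≠ 0 := by
  intro h0
  have hv := (N.adj_mem _ _ h).2
  have : v ∈ N.verts.filter fun w => N.adj u w := Finset.mem_filter.2 ⟨hv, h⟩
  have := Finset.card_pos.2 ⟨v, this⟩
  rw [show (N.verts.filter fun w => N.adj u w).card = N.outdeg u from rfl, h0] at this
  exact absurd this (by simp)

lemma exists_child (h : N.outdeg p ≠ 0) : ∃ c, N.adj p c := by
  obtain ⟨c, hc⟩ := Finset.card_pos.1 (Nat.pos_of_ne_zero h)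
  exact ⟨c, (Finset.mem_filter.1 hc).2⟩

lemma exists_parent (h : N.indeg p ≠ 0) : ∃ q, N.adj q p := by
  obtain ⟨c, hc⟩ := Finset.card_pos.1 (Nat.pos_of_ne_zero h)
  exact ⟨c, (Finset.mem_filter.1 hc).2⟩

lemma child_unique (h : N.outdeg w = 1) (ha : N.adj w a) (hb : N.adj w b) : a = b := by
  have ha' : a ∈ N.verts.filter fun v => N.adj w v :=
    Finset.mem_filter.2 ⟨(N.adj_mem _ _ ha).2, ha⟩
  have hb' : b ∈ N.verts.filter fun v => N.adj w v :=
    Finset.mem_filter.2 ⟨(N.adj_mem _ _ hb).2, hb⟩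
  have := Finset.card_le_one.1 (le_of_eq h)
  exact this _ ha' _ hb'

lemma parent_unique (h : N.indeg v = 1) (ha : N.adj a v) (hb : N.adj b v) : a = b := by
  have ha' : a ∈ N.verts.filter fun u => N.adj u v :=
    Finset.mem_filter.2 ⟨(N.adj_mem _ _ ha).1, ha⟩
  have hb' : b ∈ N.verts.filter fun u => N.adj u v :=
    Finset.mem_filter.2 ⟨(N.adj_mem _ _ hb).1, hb⟩
  have := Finset.card_le_one.1 (le_of_eq h)
  exact this _ ha' _ hb'

lemma children_cases (h : N.outdeg p = 2) (ha : N.adj p a) (hb : N.adj p b) (hab : a ≠ b)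
    (hc : N.adj p c) : c = a ∨ c = b := by
  have hsub : ({a, b} : Finset ℕ) ⊆ N.verts.filter fun v => N.adj p v := by
    intro z hz
    rcases Finset.mem_insert.1 hz with rfl | hz
    · exact Finset.mem_filter.2 ⟨(N.adj_mem _ _ ha).2, ha⟩
    · rcases Finset.mem_singleton.1 hz with rfl
      exact Finset.mem_filter.2 ⟨(N.adj_mem _ _ hb).2, hb⟩
  have hcard : (N.verts.filter fun v => N.adj p v).card ≤ ({a, b} : Finset ℕ).card := by
    rw [show (N.verts.filter fun v => N.adj p v).card = N.outdeg p from rfl, h,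
      Finset.card_insert_of_notMem (by simpa using hab), Finset.card_singleton]
  have heq := Finset.eq_of_subset_of_card_le hsub hcard
  have : c ∈ ({a, b} : Finset ℕ) := by
    rw [heq]; exact Finset.mem_filter.2 ⟨(N.adj_mem _ _ hc).2, hc⟩
  simpa using this

lemma parents_cases (h : N.indeg v = 2) (ha : N.adj a v) (hb : N.adj b v) (hab : a ≠ b)
    (hc : N.adj c v) : c = a ∨ c = b := by
  have hsub : ({a, b} : Finset ℕ) ⊆ N.verts.filter fun u => N.adj u v := by
    intro z hz
    rcases Finset.mem_insert.1 hz with rfl | hz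
    · exact Finset.mem_filter.2 ⟨(N.adj_mem _ _ ha).1, ha⟩
    · rcases Finset.mem_singleton.1 hz with rfl
      exact Finset.mem_filter.2 ⟨(N.adj_mem _ _ hb).1, hb⟩
  have hcard : (N.verts.filter fun u => N.adj u v).card ≤ ({a, b} : Finset ℕ).card := by
    rw [show (N.verts.filter fun u => N.adj u v).card = N.indeg v from rfl, h,
      Finset.card_insert_of_notMem (by simpa using hab), Finset.card_singleton]
  have heq := Finset.eq_of_subset_of_card_le hsub hcard
  have : c ∈ ({a, b} : Finset ℕ) := by
    rw [heq]; exact Finset.mem_filter.2 ⟨(N.adj_mem _ _ hc).1, hc⟩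
  simpa using this

lemma exists_other_child (h : N.outdeg p = 2) (ha : N.adj p a) : ∃ b, b ≠ a ∧ N.adj p b := by
  have ha' : a ∈ N.verts.filter fun v => N.adj p v :=
    Finset.mem_filter.2 ⟨(N.adj_mem _ _ ha).2, ha⟩
  have : ((N.verts.filter fun v => N.adj p v).erase a).Nonempty := by
    rw [← Finset.card_pos, Finset.card_erase_of_mem ha',
      show (N.verts.filter fun v => N.adj p v).card = N.outdeg p from rfl, h]
    norm_num
  obtain ⟨b, hb⟩ := this
  exact ⟨b, (Finset.mem_erase.1 hb).1, (Finset.mem_filter.1 (Finset.mem_erase.1 hb).2).2⟩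

lemma exists_other_parent (h : N.indeg v = 2) (ha : N.adj a v) : ∃ b, b ≠ a ∧ N.adj b v := by
  have ha' : a ∈ N.verts.filter fun u => N.adj u v :=
    Finset.mem_filter.2 ⟨(N.adj_mem _ _ ha).1, ha⟩
  have : ((N.verts.filter fun u => N.adj u v).erase a).Nonempty := by
    rw [← Finset.card_pos, Finset.card_erase_of_mem ha',
      show (N.verts.filter fun u => N.adj u v).card = N.indeg v from rfl, h]
    norm_num
  obtain ⟨b, hb⟩ := this
  exact ⟨b, (Finset.mem_erase.1 hb).1, (Finset.mem_filter.1 (Finset.mem_erase.1 hb).2).2⟩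

-- rank function: number of strict ancestors
open Classical in
noncomputable def rk (N : PNet) (v : ℕ) : ℕ :=
  (N.verts.filter fun u => Relation.TransGen N.adj u v).card

lemma rk_lt (hac : N.Acyclic) (h : N.adj u v) : N.rk u < N.rk v := by
  classical
  unfold rk
  apply Finset.card_lt_card
  constructor
  · intro a ha
    obtain ⟨hav, hta⟩ := Finset.mem_filter.1 ha
    exact Finset.mem_filter.2 ⟨hav, hta.trans (Relation.TransGen.single h)⟩
  · intro hsub
    have hu : u ∈ N.verts.filter fun a => Relation.TransGen N.adj a v :=
      Finset.mem_filter.2 ⟨(N.adj_mem _ _ h).1, Relation.TransGen.single h⟩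
    have := (Finset.mem_filter.1 (hsub hu)).2
    exact hac u this

lemma transGen_mono' {r s : ℕ → ℕ → Prop} (hrs : ∀ a b, r a b → Relation.TransGen s a b)
    (h : Relation.TransGen r a b) : Relation.TransGen s a b := by
  induction h with
  | single h => exact hrs _ _ h
  | tail _ h ih => exact ih.trans (hrs _ _ h)

end PNet
namespace PNet

variable {N : PNet}

lemma exists_pick (hbin : N.IsBinary) (htc : N.TreeChild) :
    (∃ x y p, x ≠ y ∧ N.IsLeaf x ∧ N.IsLeaf y ∧ N.adj p x ∧ N.adj p y ∧ N.indeg p = 0) ∨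
    (∃ x y p q, x ≠ y ∧ N.IsLeaf x ∧ N.IsLeaf y ∧ N.adj p x ∧ N.adj p y ∧
      N.indeg p = 1 ∧ N.adj q p) ∨
    (∃ x y w p q' q, x ≠ y ∧ N.IsLeaf x ∧ N.IsLeaf y ∧ N.adj w x ∧ N.indeg w = 2 ∧
      N.adj p w ∧ N.adj p y ∧ N.indeg p = 1 ∧ q' ≠ p ∧ N.adj q' w ∧ N.adj q p) := by
  classical
  obtain ⟨hac, ρ, hρroot, hρout, hreach, hclass⟩ := hbin
  set S : Finset ℕ := N.verts.filter fun v => N.outdeg v = 2 with hS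
  have hSne : S.Nonempty := ⟨ρ, Finset.mem_filter.2 ⟨hρroot.1, hρout⟩⟩
  obtain ⟨p, hpS, hpmax⟩ := Finset.exists_max_image S N.rk hSne
  obtain ⟨hp, hpout⟩ := Finset.mem_filter.1 hpS
  have hmaxrk : ∀ c, N.rk p < N.rk c → N.outdeg c ≠ 2 := by
    intro c hrk h2
    have hcv : c ∈ N.verts := by
      by_contra hcv
      -- c must be in verts if outdeg c = 2
      obtain ⟨d, hd⟩ := exists_child (N := N) (p := c) (by rw [h2]; norm_num)
      exact hcv (N.adj_mem _ _ hd).1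
    exact absurd (hpmax c (Finset.mem_filter.2 ⟨hcv, h2⟩)) (not_le.2 hrk)
  have hmax' : ∀ c, N.adj p c → N.outdeg c ≠ 2 := fun c hc => hmaxrk c (rk_lt hac hc)
  -- tree-child at p gives a leaf child y
  obtain ⟨y, hpy, hynot2⟩ := htc p hp (by rw [hpout]; norm_num)
  have hyv : y ∈ N.verts := (N.adj_mem _ _ hpy).2
  have hyρ : y ≠ ρ := fun h => indeg_pos_of_adj hpy (h ▸ hρroot.2)
  have hyleaf : N.IsLeaf y ∧ N.indeg y = 1 := by
    rcases hclass y hyv hyρ with h | h | h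
    · exact absurd h.2 (hmax' y hpy)
    · exact absurd h.1 hynot2
    · exact ⟨⟨hyv, h.2⟩, h.1⟩
  -- other child z
  obtain ⟨z, hzy, hpz⟩ := exists_other_child hpout hpy
  have hzv : z ∈ N.verts := (N.adj_mem _ _ hpz).2
  have hzρ : z ≠ ρ := fun h => indeg_pos_of_adj hpz (h ▸ hρroot.2)
  have hindegp : p = ρ ∨ (N.indeg p = 1 ∧ ∃ q, N.adj q p) := by
    by_cases hpρ : p = ρ
    · exact Or.inl hpρ
    · rcases hclass p hp hpρ with h | h | h
      · exact Or.inr ⟨h.1, exists_parent (by rw [h.1]; norm_num)⟩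
      · rw [hpout] at h; exact absurd h.2 (by norm_num)
      · rw [hpout] at h; exact absurd h.2 (by norm_num)
  rcases hclass z hzv hzρ with h | hret | hleafz
  · exact absurd h.2 (hmax' z hpz)
  · -- z is a reticulation w
    obtain ⟨hw2, hw1⟩ := hret
    obtain ⟨x, hwx⟩ := exists_child (N := N) (p := z) (by rw [hw1]; norm_num)
    obtain ⟨c, hwc, hcnot2⟩ := htc z hzv (by rw [hw1]; norm_num)
    have hcx : c = x := child_unique hw1 hwc hwx
    rw [hcx] at hcnot2
    have hxv : x ∈ N.verts := (N.adj_mem _ _ hwx).2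
    have hxρ : x ≠ ρ := fun h => indeg_pos_of_adj hwx (h ▸ hρroot.2)
    have hxout2 : N.outdeg x ≠ 2 :=
      hmaxrk x ((rk_lt hac hpz).trans (rk_lt hac hwx))
    have hxleaf : N.IsLeaf x ∧ N.indeg x = 1 := by
      rcases hclass x hxv hxρ with h | h | h
      · exact absurd h.2 hxout2
      · exact absurd h.1 hcnot2
      · exact ⟨⟨hxv, h.2⟩, h.1⟩
    have hpz' : p ≠ z := fun h => not_adj_self hac p (h ▸ hpz)
    have hxy : x ≠ y := by
      intro h
      exact hpz' (parent_unique hyleaf.2 hpy (h ▸ hwx))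
    obtain ⟨q', hq'p, hq'w⟩ := exists_other_parent hw2 hpz
    rcases hindegp with hpρ | ⟨hp1, q, hqp⟩
    · -- p is the root: contradiction via reachability
      exfalso
      subst hpρ
      have claim : ∀ v, Relation.ReflTransGen N.adj p v → v = p ∨ v = z ∨ v = y ∨ v = x := by
        intro v h
        induction h with
        | refl => exact Or.inl rfl
        | tail hs ha ih =>
          rename_i b v'
          rcases ih with rfl | rfl | rfl | rfl
          · rcases children_cases hpout hpz hpy hzy ha with rfl | rfl
            · exact Or.inr (Or.inl rfl)
            · exact Or.inr (Or.inr (Or.inl rfl))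
          · exact Or.inr (Or.inr (Or.inr (child_unique hw1 ha hwx)))
          · exact absurd ha (leaf_not_adj hyleaf.1)
          · exact absurd ha (leaf_not_adj hxleaf.1)
      have hq'v : q' ∈ N.verts := (N.adj_mem _ _ hq'w).1
      rcases claim q' (hreach q' hq'v) with rfl | rfl | rfl | rfl
      · exact hq'p rfl
      · exact not_adj_self hac q' hq'w
      · exact leaf_not_adj hyleaf.1 hq'w
      · exact leaf_not_adj hxleaf.1 hq'w
    · exact Or.inr (Or.inr ⟨x, y, z, p, q', q, hxy, hxleaf.1, hyleaf.1, hwx, hw2, hpz, hpy,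
        hp1, hq'p, hq'w, hqp⟩)
  · -- z is a leaf: cherry
    have hzleaf : N.IsLeaf z := ⟨hzv, hleafz.2⟩
    rcases hindegp with hpρ | ⟨hp1, q, hqp⟩
    · exact Or.inl ⟨z, y, p, hzy, hzleaf, hyleaf.1, hpz, hpy, hpρ ▸ hρroot.2⟩
    · exact Or.inr (Or.inl ⟨z, y, p, q, hzy, hzleaf, hyleaf.1, hpz, hpy, hp1, hqp⟩)

end PNet
namespace PNet

variable {N : PNet} {x y p q : ℕ}

lemma base_step (hbin : N.IsBinary)
    (hxy : x ≠ y) (hx : N.IsLeaf x) (hy : N.IsLeaf y)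
    (hpx : N.adj p x) (hpy : N.adj p y) (hp0 : N.indeg p = 0) :
    ∃ T, IsTrivialNet T ∧ N.CherryPick T := by
  classical
  obtain ⟨hac, ρ, hρroot, hρout, hreach, hclass⟩ := hbin
  have hpv : p ∈ N.verts := (N.adj_mem _ _ hpx).1
  have hpρ : p = ρ := by
    by_contra hne
    rcases hclass p hpv hne with h | h | h <;> rw [hp0] at h <;> simp at h
  have hpout : N.outdeg p = 2 := hpρ ▸ hρout
  have hxv : x ∈ N.verts := (N.adj_mem _ _ hpx).2
  have hyv : y ∈ N.verts := (N.adj_mem _ _ hpy).2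
  have hpx' : p ≠ x := fun h => not_adj_self hac p (h ▸ hpx)
  have hpy' : p ≠ y := fun h => not_adj_self hac p (h ▸ hpy)
  have hchild : ∀ c, N.adj p c → c = x ∨ c = y :=
    fun c hc => children_cases hpout hpx hpy hxy hc
  have hverts : N.verts = {p, x, y} := by
    apply Finset.Subset.antisymm
    · intro v hv
      have hr := hreach v hv
      rw [← hpρ] at hr
      have claim : ∀ v, Relation.ReflTransGen N.adj p v → v = p ∨ v = x ∨ v = y := by
        intro v h
        induction h with
        | refl => exact Or.inl rfl
        | tail hs ha ih =>
          rcases ih with rfl | rfl | rfl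
          · exact Or.inr (hchild _ ha)
          · exact absurd ha (leaf_not_adj hx)
          · exact absurd ha (leaf_not_adj hy)
      rcases claim v hr with rfl | rfl | rfl <;> simp
    · intro v hv
      simp only [Finset.mem_insert, Finset.mem_singleton] at hv
      rcases hv with rfl | rfl | rfl <;> assumption
  refine ⟨⟨N.verts \ {y}, fun u v => N.adj u v ∧ v ≠ y,
    fun u v => inferInstanceAs (Decidable (N.adj u v ∧ v ≠ y)), ?_⟩, ?_, ?_⟩
  · rintro u v ⟨h, hvy⟩
    refine ⟨Finset.mem_sdiff.2 ⟨(N.adj_mem _ _ h).1, ?_⟩,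
      Finset.mem_sdiff.2 ⟨(N.adj_mem _ _ h).2, by simpa using hvy⟩⟩
    simp only [Finset.mem_singleton]
    intro h'
    subst h'
    exact leaf_not_adj hy h
  · refine ⟨p, x, hpx', ?_, ?_⟩
    · show N.verts \ {y} = {p, x}
      rw [hverts]
      ext v
      simp only [Finset.mem_sdiff, Finset.mem_insert, Finset.mem_singleton]
      constructor
      · rintro ⟨h1 | h1 | h1, h2⟩ <;> simp_all
      · rintro (rfl | rfl) <;> simp_all [hxy, hpy'.symm, Ne.symm hpy']
    · intro u v
      show N.adj u v ∧ v ≠ y ↔ _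
      constructor
      · rintro ⟨h, hvy⟩
        have huv : u ∈ N.verts := (N.adj_mem _ _ h).1
        rw [hverts] at huv
        simp only [Finset.mem_insert, Finset.mem_singleton] at huv
        rcases huv with rfl | rfl | rfl
        · rcases hchild v h with rfl | rfl
          · exact ⟨rfl, rfl⟩
          · exact absurd rfl hvy
        · exact absurd h (leaf_not_adj hx)
        · exact absurd h (leaf_not_adj hy)
      · rintro ⟨rfl, rfl⟩
        exact ⟨hpx, hxy⟩
  · exact ⟨x, y, p, hxy, hx, hy, hpx, hpy, Or.inl ⟨hp0, rfl, fun u v => Iff.rfl⟩⟩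

end PNet
namespace PNet

variable {N : PNet} {x y p q : ℕ}

lemma cherry_step (hbin : N.IsBinary) (htc : N.TreeChild)
    (hxy : x ≠ y) (hx : N.IsLeaf x) (hy : N.IsLeaf y)
    (hpx : N.adj p x) (hpy : N.adj p y) (hp1 : N.indeg p = 1) (hqp : N.adj q p) :
    ∃ N' : PNet, N.CherryPick N' ∧ N'.IsBinary ∧ N'.TreeChild ∧
      N'.verts.card + 2 = N.verts.card := by
  classical
  obtain ⟨hac, ρ, hρroot, hρout, hreach, hclass⟩ := hbin
  have hpv : p ∈ N.verts := (N.adj_mem _ _ hpx).1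
  have hxv : x ∈ N.verts := (N.adj_mem _ _ hpx).2
  have hyv : y ∈ N.verts := (N.adj_mem _ _ hpy).2
  have hqv : q ∈ N.verts := (N.adj_mem _ _ hqp).1
  have hpρ : p ≠ ρ := fun h => by rw [h, hρroot.2] at hp1; exact absurd hp1 (by norm_num)
  have hxρ : x ≠ ρ := fun h => indeg_pos_of_adj hpx (h ▸ hρroot.2)
  have hyρ : y ≠ ρ := fun h => indeg_pos_of_adj hpy (h ▸ hρroot.2)
  have hpx' : p ≠ x := fun h => not_adj_self hac p (h ▸ hpx)
  have hpy' : p ≠ y := fun h => not_adj_self hac p (h ▸ hpy)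
  have hqp' : q ≠ p := fun h => not_adj_self hac p (h ▸ hqp)
  have hqx : q ≠ x := fun h => leaf_not_adj hx (h ▸ hqp)
  have hqy : q ≠ y := fun h => leaf_not_adj hy (h ▸ hqp)
  have hpout : N.outdeg p = 2 := by
    rcases hclass p hpv hpρ with h | h | h
    · exact h.2
    · rw [hp1] at h; exact absurd h.1 (by norm_num)
    · exact absurd h.2 (outdeg_pos_of_adj hpx)
  have hxin : N.indeg x = 1 := by
    rcases hclass x hxv hxρ with h | h | h
    · rw [hx.2] at h; exact absurd h.2 (by norm_num)
    · rw [hx.2] at h; exact absurd h.2 (by norm_num)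
    · exact h.1
  have hyin : N.indeg y = 1 := by
    rcases hclass y hyv hyρ with h | h | h
    · rw [hy.2] at h; exact absurd h.2 (by norm_num)
    · rw [hy.2] at h; exact absurd h.2 (by norm_num)
    · exact h.1
  have hchild : ∀ c, N.adj p c → c = x ∨ c = y :=
    fun c hc => children_cases hpout hpx hpy hxy hc
  have hparx : ∀ u, N.adj u x → u = p := fun u hu => parent_unique hxin hu hpx
  have hpary : ∀ u, N.adj u y → u = p := fun u hu => parent_unique hyin hu hpy
  have hparp : ∀ u, N.adj u p → u = q := fun u hu => parent_unique hp1 hu hqp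
  -- the reduced network
  set adj' : ℕ → ℕ → Prop :=
    fun u v => (N.adj u v ∧ u ≠ p ∧ v ≠ p ∧ v ≠ y) ∨ (u = q ∧ v = x) with hadj'
  have hmemyp : ∀ {v : ℕ}, v ∈ N.verts → v ≠ y → v ≠ p → v ∈ N.verts \ {y, p} := by
    intro v hv h1 h2
    simp [Finset.mem_sdiff, hv, h1, h2]
  have hmem : ∀ u v, adj' u v → u ∈ N.verts \ {y, p} ∧ v ∈ N.verts \ {y, p} := by
    rintro u v (⟨h, hup, hvp, hvy⟩ | ⟨rfl, rfl⟩)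
    · refine ⟨hmemyp (N.adj_mem _ _ h).1 (fun h' => leaf_not_adj hy (h' ▸ h)) hup,
        hmemyp (N.adj_mem _ _ h).2 hvy hvp⟩
    · exact ⟨hmemyp hqv hqy hqp', hmemyp hxv hxy hpx'.symm⟩
  let N' : PNet :=
    ⟨N.verts \ {y, p}, adj', fun u v => inferInstanceAs (Decidable _), hmem⟩
  -- degree transfer lemmas
  have hin_same : ∀ v, v ≠ x → v ≠ p → v ≠ y → N'.indeg v = N.indeg v := by
    intro v h1 h2 h3
    have : ((N.verts \ {y, p}).filter fun u => adj' u v) =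
        N.verts.filter fun u => N.adj u v := by
      ext u
      simp only [Finset.mem_filter, Finset.mem_sdiff, Finset.mem_insert, Finset.mem_singleton,
        not_or]
      constructor
      · rintro ⟨⟨hu, _⟩, (⟨h, _⟩ | ⟨rfl, rfl⟩)⟩
        · exact ⟨hu, h⟩
        · exact absurd rfl h1
      · rintro ⟨hu, h⟩
        have hup : u ≠ p := fun he => by
          rcases hchild v (he ▸ h) with rfl | rfl
          exacts [h1 rfl, h3 rfl]
        have huy : u ≠ y := fun he => leaf_not_adj hy (he ▸ h)
        exact ⟨⟨hu, huy, hup⟩, Or.inl ⟨h, hup, h2, h3⟩⟩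
    show ((N.verts \ {y, p}).filter fun u => adj' u v).card = _
    rw [this]; rfl
  have hin_x : N'.indeg x = 1 := by
    have : ((N.verts \ {y, p}).filter fun u => adj' u x) = {q} := by
      ext u
      simp only [Finset.mem_filter, Finset.mem_sdiff, Finset.mem_insert, Finset.mem_singleton,
        not_or]
      constructor
      · rintro ⟨⟨hu, _⟩, (⟨h, hup, _⟩ | ⟨rfl, -⟩)⟩
        · exact absurd (hparx u h) hup
        · rfl
      · rintro rfl
        exact ⟨⟨hqv, hqy, hqp'⟩, Or.inr ⟨rfl, rfl⟩⟩
    show ((N.verts \ {y, p}).filter fun u => adj' u x).card = 1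
    rw [this]; rfl
  have hout_same : ∀ u, u ≠ q → u ≠ p → N'.outdeg u = N.outdeg u := by
    intro u h1 h2
    have : ((N.verts \ {y, p}).filter fun v => adj' u v) =
        N.verts.filter fun v => N.adj u v := by
      ext v
      simp only [Finset.mem_filter, Finset.mem_sdiff, Finset.mem_insert, Finset.mem_singleton,
        not_or]
      constructor
      · rintro ⟨⟨hv, _⟩, (⟨h, _⟩ | ⟨rfl, rfl⟩)⟩
        · exact ⟨hv, h⟩
        · exact absurd rfl h1
      · rintro ⟨hv, h⟩
        have hvp : v ≠ p := fun he => h1 (hparp u (he ▸ h))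
        have hvy : v ≠ y := fun he => h2 (hpary u (he ▸ h))
        exact ⟨⟨hv, hvy, hvp⟩, Or.inl ⟨h, h2, hvp, hvy⟩⟩
    show ((N.verts \ {y, p}).filter fun v => adj' u v).card = _
    rw [this]; rfl
  have hout_q : N'.outdeg q = N.outdeg q := by
    have hset : ((N.verts \ {y, p}).filter fun v => adj' q v) =
        insert x ((N.verts.filter fun v => N.adj q v).erase p) := by
      ext v
      simp only [Finset.mem_filter, Finset.mem_sdiff, Finset.mem_insert, Finset.mem_singleton,
        Finset.mem_erase, not_or]
      constructor
      · rintro ⟨⟨hv, hvy, hvp⟩, (⟨h, _⟩ | ⟨_, rfl⟩)⟩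
        · exact Or.inr ⟨hvp, hv, h⟩
        · exact Or.inl rfl
      · rintro (rfl | ⟨hvp, hv, h⟩)
        · exact ⟨⟨hxv, hxy, hpx'.symm⟩, Or.inr ⟨rfl, rfl⟩⟩
        · have hvy : v ≠ y := fun he => hqp' (hpary q (he ▸ h))
          exact ⟨⟨hv, hvy, hvp⟩, Or.inl ⟨h, hqp', hvp, hvy⟩⟩
    have hxnot : x ∉ (N.verts.filter fun v => N.adj q v).erase p := by
      intro hmem'
      exact absurd (hparx q (Finset.mem_filter.1 (Finset.mem_erase.1 hmem').2).2) hqp'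
    have hpmem : p ∈ N.verts.filter fun v => N.adj q v := Finset.mem_filter.2 ⟨hpv, hqp⟩
    have hpos : 0 < (N.verts.filter fun v => N.adj q v).card := Finset.card_pos.2 ⟨p, hpmem⟩
    show ((N.verts \ {y, p}).filter fun v => adj' q v).card = _
    rw [hset, Finset.card_insert_of_notMem hxnot, Finset.card_erase_of_mem hpmem]
    show (N.verts.filter fun v => N.adj q v).card - 1 + 1 =
      (N.verts.filter fun v => N.adj q v).card
    omega
  refine ⟨N', ?_, ?_, ?_, ?_⟩
  · exact ⟨x, y, p, hxy, hx, hy, hpx, hpy, Or.inr ⟨q, hqp, rfl, fun u v => Iff.rfl⟩⟩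
  · -- binary
    refine ⟨?_, ρ, ⟨?_, ?_⟩, ?_, ?_, ?_⟩
    · -- acyclic
      intro v hv
      refine hac v (transGen_mono' ?_ hv)
      rintro a b (⟨h, _⟩ | ⟨rfl, rfl⟩)
      · exact Relation.TransGen.single h
      · exact (Relation.TransGen.single hqp).tail hpx
    · exact hmemyp hρroot.1 (Ne.symm hyρ) (Ne.symm hpρ)
    · rw [hin_same ρ (Ne.symm hxρ) (Ne.symm hpρ) (Ne.symm hyρ)]
      exact hρroot.2
    · rcases eq_or_ne ρ q with rfl | h
      · rw [hout_q]; exact hρout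
      · rw [hout_same ρ h (Ne.symm hpρ)]; exact hρout
    · -- reachability
      have claim : ∀ v, Relation.ReflTransGen N.adj ρ v →
          (v = p ∨ v = x ∨ v = y) ∨ Relation.ReflTransGen N'.adj ρ v := by
        intro v h
        induction h with
        | refl => exact Or.inr Relation.ReflTransGen.refl
        | tail hs ha ih =>
          rename_i b v'
          by_cases hv' : v' = p ∨ v' = x ∨ v' = y
          · exact Or.inl hv'
          push_neg at hv'
          rcases ih with (rfl | rfl | rfl) | hr
          · rcases hchild _ ha with rfl | rfl
            · exact absurd (Or.inr (Or.inl rfl)) (by push_neg; exact hv')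
            · exact absurd (Or.inr (Or.inr rfl)) (by push_neg; exact hv')
          · exact absurd ha (leaf_not_adj hx)
          · exact absurd ha (leaf_not_adj hy)
          · have hbp : b ≠ p := fun he => by
              rcases hchild v' (he ▸ ha) with rfl | rfl
              exacts [hv'.2.1 rfl, hv'.2.2 rfl]
            exact Or.inr (hr.tail (Or.inl ⟨ha, hbp, hv'.1, hv'.2.2⟩))
      have hreachq : Relation.ReflTransGen N'.adj ρ q := by
        rcases claim q (hreach q hqv) with (rfl | rfl | rfl) | h
        · exact absurd rfl hqp'
        · exact absurd rfl hqx
        · exact absurd rfl hqy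
        · exact h
      intro v hv
      have hv' : v ∈ N.verts ∧ v ≠ y ∧ v ≠ p := by
        have := hv
        simp only [N', Finset.mem_sdiff, Finset.mem_insert, Finset.mem_singleton, not_or] at this
        exact ⟨this.1, this.2⟩
      rcases eq_or_ne v x with rfl | hvx
      · exact hreachq.tail (Or.inr ⟨rfl, rfl⟩)
      · rcases claim v (hreach v hv'.1) with (rfl | rfl | rfl) | h
        · exact absurd rfl hv'.2.2
        · exact absurd rfl hvx
        · exact absurd rfl hv'.2.1
        · exact h
    · -- classification
      intro v hv hvρ
      have hv' : v ∈ N.verts ∧ v ≠ y ∧ v ≠ p := by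
        simp only [N', Finset.mem_sdiff, Finset.mem_insert, Finset.mem_singleton, not_or] at hv
        exact ⟨hv.1, hv.2⟩
      rcases eq_or_ne v x with rfl | hvx
      · refine Or.inr (Or.inr ⟨hin_x, ?_⟩)
        rw [hout_same _ (Ne.symm hqx) (Ne.symm hpx')]
        exact hx.2
      rcases eq_or_ne v q with rfl | hvq
      · rw [hin_same v hvx hv'.2.2 hv'.2.1, hout_q]
        exact hclass v hv'.1 hvρ
      · rw [hin_same v hvx hv'.2.2 hv'.2.1, hout_same v hvq hv'.2.2]
        exact hclass v hv'.1 hvρ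
  · -- tree-child
    intro v hv hvout
    have hv' : v ∈ N.verts ∧ v ≠ y ∧ v ≠ p := by
      simp only [N', Finset.mem_sdiff, Finset.mem_insert, Finset.mem_singleton, not_or] at hv
      exact ⟨hv.1, hv.2⟩
    rcases eq_or_ne v q with rfl | hvq
    · exact ⟨x, Or.inr ⟨rfl, rfl⟩, by rw [hin_x]; norm_num⟩
    · rw [hout_same v hvq hv'.2.2] at hvout
      obtain ⟨c, hvc, hc2⟩ := htc v hv'.1 hvout
      have hcp : c ≠ p := fun he => hvq (hparp v (he ▸ hvc))
      have hcy : c ≠ y := fun he => hv'.2.2 (hpary v (he ▸ hvc))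
      refine ⟨c, Or.inl ⟨hvc, hv'.2.2, hcp, hcy⟩, ?_⟩
      rcases eq_or_ne c x with rfl | hcx
      · rw [hin_x]; norm_num
      · rw [hin_same c hcx hcp hcy]; exact hc2
  · -- cardinality
    have hsub : ({y, p} : Finset ℕ) ⊆ N.verts := by
      intro z hz
      rcases Finset.mem_insert.1 hz with rfl | hz
      · exact hyv
      · rw [Finset.mem_singleton.1 hz]; exact hpv
    have hcard2 : ({y, p} : Finset ℕ).card = 2 := by
      rw [Finset.card_insert_of_notMem (by simpa using Ne.symm hpy'), Finset.card_singleton]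
    have := Finset.card_sdiff_of_subset hsub
    have hle := Finset.card_le_card hsub
    show (N.verts \ {y, p}).card + 2 = N.verts.card
    omega

end PNet
namespace PNet

variable {N : PNet} {x y w p q' q : ℕ}

lemma retcherry_step (hbin : N.IsBinary) (htc : N.TreeChild)
    (hxy : x ≠ y) (hx : N.IsLeaf x) (hy : N.IsLeaf y)
    (hwx : N.adj w x) (hw2 : N.indeg w = 2) (hpw : N.adj p w) (hpy : N.adj p y)
    (hp1 : N.indeg p = 1) (hq'p : q' ≠ p) (hq'w : N.adj q' w) (hqp : N.adj q p) :
    ∃ N' : PNet, N.RetCherryPick N' ∧ N'.IsBinary ∧ N'.TreeChild ∧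
      N'.verts.card + 2 = N.verts.card := by
  classical
  obtain ⟨hac, ρ, hρroot, hρout, hreach, hclass⟩ := hbin
  have hwv : w ∈ N.verts := (N.adj_mem _ _ hwx).1
  have hxv : x ∈ N.verts := (N.adj_mem _ _ hwx).2
  have hyv : y ∈ N.verts := (N.adj_mem _ _ hpy).2
  have hpv : p ∈ N.verts := (N.adj_mem _ _ hpw).1
  have hq'v : q' ∈ N.verts := (N.adj_mem _ _ hq'w).1
  have hqv : q ∈ N.verts := (N.adj_mem _ _ hqp).1
  have hpρ : p ≠ ρ := fun h => by rw [h, hρroot.2] at hp1; exact absurd hp1 (by norm_num)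
  have hwρ : w ≠ ρ := fun h => indeg_pos_of_adj hpw (h ▸ hρroot.2)
  have hxρ : x ≠ ρ := fun h => indeg_pos_of_adj hwx (h ▸ hρroot.2)
  have hyρ : y ≠ ρ := fun h => indeg_pos_of_adj hpy (h ▸ hρroot.2)
  have hpw' : p ≠ w := fun h => not_adj_self hac p (h ▸ hpw)
  have hpy' : p ≠ y := fun h => not_adj_self hac p (h ▸ hpy)
  have hwx' : w ≠ x := fun h => not_adj_self hac w (h ▸ hwx)
  have hqp' : q ≠ p := fun h => not_adj_self hac p (h ▸ hqp)
  have hq'w' : q' ≠ w := fun h => not_adj_self hac w (h ▸ hq'w)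
  have hq'x : q' ≠ x := fun h => leaf_not_adj hx (h ▸ hq'w)
  have hq'y : q' ≠ y := fun h => leaf_not_adj hy (h ▸ hq'w)
  have hqx : q ≠ x := fun h => leaf_not_adj hx (h ▸ hqp)
  have hqy : q ≠ y := fun h => leaf_not_adj hy (h ▸ hqp)
  have hqw : q ≠ w := fun h => hac p ((Relation.TransGen.single hpw).tail (h ▸ hqp))
  have hpx' : p ≠ x := fun h => leaf_not_adj hx (h ▸ hpw)
  have hwy : w ≠ y := fun h => leaf_not_adj hy (h ▸ hwx)
  have hpout : N.outdeg p = 2 := by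
    rcases hclass p hpv hpρ with h | h | h
    · exact h.2
    · rw [hp1] at h; exact absurd h.1 (by norm_num)
    · exact absurd h.2 (outdeg_pos_of_adj hpw)
  have hwout : N.outdeg w = 1 := by
    rcases hclass w hwv hwρ with h | h | h
    · rw [hw2] at h; exact absurd h.1 (by norm_num)
    · exact h.2
    · rw [hw2] at h; exact absurd h.1 (by norm_num)
  have hxin : N.indeg x = 1 := by
    rcases hclass x hxv hxρ with h | h | h
    · rw [hx.2] at h; exact absurd h.2 (by norm_num)
    · rw [hx.2] at h; exact absurd h.2 (by norm_num)
    · exact h.1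
  have hyin : N.indeg y = 1 := by
    rcases hclass y hyv hyρ with h | h | h
    · rw [hy.2] at h; exact absurd h.2 (by norm_num)
    · rw [hy.2] at h; exact absurd h.2 (by norm_num)
    · exact h.1
  have hchildp : ∀ c, N.adj p c → c = w ∨ c = y :=
    fun c hc => children_cases hpout hpw hpy hwy hc
  have hchildw : ∀ c, N.adj w c → c = x := fun c hc => child_unique hwout hc hwx
  have hparw : ∀ u, N.adj u w → u = p ∨ u = q' :=
    fun u hu => parents_cases hw2 hpw hq'w (Ne.symm hq'p) hu
  have hparx : ∀ u, N.adj u x → u = w := fun u hu => parent_unique hxin hu hwx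
  have hpary : ∀ u, N.adj u y → u = p := fun u hu => parent_unique hyin hu hpy
  have hparp : ∀ u, N.adj u p → u = q := fun u hu => parent_unique hp1 hu hqp
  -- the reduced network
  set adj' : ℕ → ℕ → Prop := fun u v =>
    (N.adj u v ∧ u ≠ w ∧ v ≠ w ∧ u ≠ p ∧ v ≠ p) ∨ (u = q' ∧ v = x) ∨ (u = q ∧ v = y)
    with hadj'
  have hmemwp : ∀ {v : ℕ}, v ∈ N.verts → v ≠ w → v ≠ p → v ∈ N.verts \ {w, p} := by
    intro v hv h1 h2
    simp [Finset.mem_sdiff, hv, h1, h2]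
  have hmem : ∀ u v, adj' u v → u ∈ N.verts \ {w, p} ∧ v ∈ N.verts \ {w, p} := by
    rintro u v (⟨h, huw, hvw, hup, hvp⟩ | ⟨rfl, rfl⟩ | ⟨rfl, rfl⟩)
    · exact ⟨hmemwp (N.adj_mem _ _ h).1 huw hup, hmemwp (N.adj_mem _ _ h).2 hvw hvp⟩
    · exact ⟨hmemwp hq'v hq'w' hq'p, hmemwp hxv (Ne.symm hwx') (Ne.symm hpx')⟩
    · exact ⟨hmemwp hqv hqw hqp', hmemwp hyv (Ne.symm hwy) (Ne.symm hpy')⟩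
  let N' : PNet :=
    ⟨N.verts \ {w, p}, adj', fun u v => inferInstanceAs (Decidable _), hmem⟩
  -- degree transfer lemmas
  have hin_same : ∀ v, v ≠ x → v ≠ y → v ≠ w → v ≠ p → N'.indeg v = N.indeg v := by
    intro v h1 h2 h3 h4
    have : ((N.verts \ {w, p}).filter fun u => adj' u v) =
        N.verts.filter fun u => N.adj u v := by
      ext u
      simp only [Finset.mem_filter, Finset.mem_sdiff, Finset.mem_insert, Finset.mem_singleton,
        not_or]
      constructor
      · rintro ⟨⟨hu, _⟩, (⟨h, _⟩ | ⟨rfl, rfl⟩ | ⟨rfl, rfl⟩)⟩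
        · exact ⟨hu, h⟩
        · exact absurd rfl h1
        · exact absurd rfl h2
      · rintro ⟨hu, h⟩
        have huw : u ≠ w := fun he => h1 (hchildw v (he ▸ h))
        have hup : u ≠ p := fun he => by
          rcases hchildp v (he ▸ h) with rfl | rfl
          exacts [h3 rfl, h2 rfl]
        exact ⟨⟨hu, huw, hup⟩, Or.inl ⟨h, huw, h3, hup, h4⟩⟩
    show ((N.verts \ {w, p}).filter fun u => adj' u v).card = _
    rw [this]; rfl
  have hin_x : N'.indeg x = 1 := by
    have : ((N.verts \ {w, p}).filter fun u => adj' u x) = {q'} := by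
      ext u
      simp only [Finset.mem_filter, Finset.mem_sdiff, Finset.mem_insert, Finset.mem_singleton,
        not_or]
      constructor
      · rintro ⟨⟨hu, huw, _⟩, (⟨h, _⟩ | ⟨rfl, -⟩ | ⟨rfl, he⟩)⟩
        · exact absurd (hparx u h) huw
        · rfl
        · exact absurd he hxy
      · rintro rfl
        exact ⟨⟨hq'v, hq'w', hq'p⟩, Or.inr (Or.inl ⟨rfl, rfl⟩)⟩
    show ((N.verts \ {w, p}).filter fun u => adj' u x).card = 1
    rw [this]; rfl
  have hin_y : N'.indeg y = 1 := by
    have : ((N.verts \ {w, p}).filter fun u => adj' u y) = {q} := by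
      ext u
      simp only [Finset.mem_filter, Finset.mem_sdiff, Finset.mem_insert, Finset.mem_singleton,
        not_or]
      constructor
      · rintro ⟨⟨hu, _, hup⟩, (⟨h, _⟩ | ⟨rfl, he⟩ | ⟨rfl, -⟩)⟩
        · exact absurd (hpary u h) hup
        · exact absurd he.symm hxy
        · rfl
      · rintro rfl
        exact ⟨⟨hqv, hqw, hqp'⟩, Or.inr (Or.inr ⟨rfl, rfl⟩)⟩
    show ((N.verts \ {w, p}).filter fun u => adj' u y).card = 1
    rw [this]; rfl
  have hout_same : ∀ u, u ≠ q' → u ≠ q → u ≠ w → u ≠ p → N'.outdeg u = N.outdeg u := by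
    intro u h1 h2 h3 h4
    have : ((N.verts \ {w, p}).filter fun v => adj' u v) =
        N.verts.filter fun v => N.adj u v := by
      ext v
      simp only [Finset.mem_filter, Finset.mem_sdiff, Finset.mem_insert, Finset.mem_singleton,
        not_or]
      constructor
      · rintro ⟨⟨hv, _⟩, (⟨h, _⟩ | ⟨rfl, rfl⟩ | ⟨rfl, rfl⟩)⟩
        · exact ⟨hv, h⟩
        · exact absurd rfl h1
        · exact absurd rfl h2
      · rintro ⟨hv, h⟩
        have hvw : v ≠ w := fun he => by
          rcases hparw u (he ▸ h) with rfl | rfl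
          exacts [h4 rfl, h1 rfl]
        have hvp : v ≠ p := fun he => h2 (hparp u (he ▸ h))
        exact ⟨⟨hv, hvw, hvp⟩, Or.inl ⟨h, h3, hvw, h4, hvp⟩⟩
    show ((N.verts \ {w, p}).filter fun v => adj' u v).card = _
    rw [this]; rfl
  have houtq : N'.outdeg q = N.outdeg q ∧ N'.outdeg q' = N.outdeg q' := by
    rcases eq_or_ne q q' with rfl | hqq'
    · -- q = q' : children of q are exactly p and w; new children are x and y
      have hqout : N.outdeg q = 2 := by
        rcases eq_or_ne q ρ with rfl | hqρ
        · exact hρout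
        rcases hclass q hqv hqρ with h | h | h
        · exact h.2
        · exfalso; exact hpw' (child_unique h.2 hqp hq'w)
        · exact absurd h.2 (outdeg_pos_of_adj hqp)
      have hchildq : ∀ c, N.adj q c → c = p ∨ c = w :=
        fun c hc => children_cases hqout hqp hq'w hpw' hc
      have hset : ((N.verts \ {w, p}).filter fun v => adj' q v) = {x, y} := by
        ext v
        simp only [Finset.mem_filter, Finset.mem_sdiff, Finset.mem_insert, Finset.mem_singleton,
          not_or]
        constructor
        · rintro ⟨⟨hv, hvw, hvp⟩, (⟨h, _⟩ | ⟨-, rfl⟩ | ⟨-, rfl⟩)⟩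
          · rcases hchildq v h with rfl | rfl
            exacts [absurd rfl hvp, absurd rfl hvw]
          · exact Or.inl rfl
          · exact Or.inr rfl
        · rintro (rfl | rfl)
          · exact ⟨⟨hxv, Ne.symm hwx', Ne.symm hpx'⟩, Or.inr (Or.inl ⟨rfl, rfl⟩)⟩
          · exact ⟨⟨hyv, Ne.symm hwy, Ne.symm hpy'⟩, Or.inr (Or.inr ⟨rfl, rfl⟩)⟩
      have : N'.outdeg q = 2 := by
        show ((N.verts \ {w, p}).filter fun v => adj' q v).card = 2
        rw [hset]
        rw [Finset.card_insert_of_notMem (by simpa using hxy), Finset.card_singleton]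
      rw [this, hqout]
      exact ⟨rfl, rfl⟩
    · constructor
      · -- children of q : erase p, insert y
        have hset : ((N.verts \ {w, p}).filter fun v => adj' q v) =
            insert y ((N.verts.filter fun v => N.adj q v).erase p) := by
          ext v
          simp only [Finset.mem_filter, Finset.mem_sdiff, Finset.mem_insert,
            Finset.mem_singleton, Finset.mem_erase, not_or]
          constructor
          · rintro ⟨⟨hv, hvw, hvp⟩, (⟨h, _⟩ | ⟨he, rfl⟩ | ⟨-, rfl⟩)⟩
            · exact Or.inr ⟨hvp, hv, h⟩
            · exact absurd he hqq'
            · exact Or.inl rfl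
          · rintro (rfl | ⟨hvp, hv, h⟩)
            · exact ⟨⟨hyv, Ne.symm hwy, Ne.symm hpy'⟩, Or.inr (Or.inr ⟨rfl, rfl⟩)⟩
            · have hvw : v ≠ w := fun he => by
                rcases hparw q (he ▸ h) with rfl | rfl
                exacts [hqp' rfl, hqq' rfl]
              exact ⟨⟨hv, hvw, hvp⟩, Or.inl ⟨h, hqw, hvw, hqp', hvp⟩⟩
        have hynot : y ∉ (N.verts.filter fun v => N.adj q v).erase p := by
          intro hmem'
          exact absurd (hpary q (Finset.mem_filter.1 (Finset.mem_erase.1 hmem').2).2) hqp'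
        have hpmem : p ∈ N.verts.filter fun v => N.adj q v := Finset.mem_filter.2 ⟨hpv, hqp⟩
        have hpos : 0 < (N.verts.filter fun v => N.adj q v).card := Finset.card_pos.2 ⟨p, hpmem⟩
        show ((N.verts \ {w, p}).filter fun v => adj' q v).card = _
        rw [hset, Finset.card_insert_of_notMem hynot, Finset.card_erase_of_mem hpmem]
        show (N.verts.filter fun v => N.adj q v).card - 1 + 1 =
          (N.verts.filter fun v => N.adj q v).card
        omega
      · -- children of q' : erase w, insert x
        have hset : ((N.verts \ {w, p}).filter fun v => adj' q' v) =
            insert x ((N.verts.filter fun v => N.adj q' v).erase w) := by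
          ext v
          simp only [Finset.mem_filter, Finset.mem_sdiff, Finset.mem_insert,
            Finset.mem_singleton, Finset.mem_erase, not_or]
          constructor
          · rintro ⟨⟨hv, hvw, hvp⟩, (⟨h, _⟩ | ⟨-, rfl⟩ | ⟨he, rfl⟩)⟩
            · exact Or.inr ⟨hvw, hv, h⟩
            · exact Or.inl rfl
            · exact absurd he.symm hqq'
          · rintro (rfl | ⟨hvw, hv, h⟩)
            · exact ⟨⟨hxv, Ne.symm hwx', Ne.symm hpx'⟩, Or.inr (Or.inl ⟨rfl, rfl⟩)⟩
            · have hvp : v ≠ p := fun he => hqq' (hparp q' (he ▸ h)).symm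
              exact ⟨⟨hv, hvw, hvp⟩, Or.inl ⟨h, hq'w', hvw, hq'p, hvp⟩⟩
        have hxnot : x ∉ (N.verts.filter fun v => N.adj q' v).erase w := by
          intro hmem'
          exact absurd (hparx q' (Finset.mem_filter.1 (Finset.mem_erase.1 hmem').2).2) hq'w'
        have hwmem : w ∈ N.verts.filter fun v => N.adj q' v := Finset.mem_filter.2 ⟨hwv, hq'w⟩
        have hpos : 0 < (N.verts.filter fun v => N.adj q' v).card :=
          Finset.card_pos.2 ⟨w, hwmem⟩
        show ((N.verts \ {w, p}).filter fun v => adj' q' v).card = _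
        rw [hset, Finset.card_insert_of_notMem hxnot, Finset.card_erase_of_mem hwmem]
        show (N.verts.filter fun v => N.adj q' v).card - 1 + 1 =
          (N.verts.filter fun v => N.adj q' v).card
        omega
  refine ⟨N', ?_, ?_, ?_, ?_⟩
  · exact ⟨x, y, w, p, hxy, hx, hy, hwx, hw2, hpw, hpy, by rw [hp1], q', hq'p, hq'w,
      Or.inr ⟨q, hqp, rfl, fun u v => Iff.rfl⟩⟩
  · -- binary
    refine ⟨?_, ρ, ⟨?_, ?_⟩, ?_, ?_, ?_⟩
    · intro v hv
      refine hac v (transGen_mono' ?_ hv)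
      rintro a b (⟨h, _⟩ | ⟨rfl, rfl⟩ | ⟨rfl, rfl⟩)
      · exact Relation.TransGen.single h
      · exact (Relation.TransGen.single hq'w).tail hwx
      · exact (Relation.TransGen.single hqp).tail hpy
    · exact hmemwp hρroot.1 (Ne.symm hwρ) (Ne.symm hpρ)
    · rw [hin_same ρ (Ne.symm hxρ) (Ne.symm hyρ) (Ne.symm hwρ) (Ne.symm hpρ)]
      exact hρroot.2
    · rcases eq_or_ne ρ q with rfl | h1
      · rw [houtq.1]; exact hρout
      rcases eq_or_ne ρ q' with rfl | h2
      · rw [houtq.2]; exact hρout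
      · rw [hout_same ρ h2 h1 (Ne.symm hwρ) (Ne.symm hpρ)]; exact hρout
    · -- reachability
      have claim : ∀ v, Relation.ReflTransGen N.adj ρ v →
          (v = p ∨ v = w ∨ v = x ∨ v = y) ∨ Relation.ReflTransGen N'.adj ρ v := by
        intro v h
        induction h with
        | refl => exact Or.inr Relation.ReflTransGen.refl
        | tail hs ha ih =>
          rename_i b v'
          by_cases hv' : v' = p ∨ v' = w ∨ v' = x ∨ v' = y
          · exact Or.inl hv'
          push_neg at hv'
          rcases ih with (rfl | rfl | rfl | rfl) | hr
          · rcases hchildp _ ha with rfl | rfl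
            exacts [absurd rfl hv'.2.1, absurd rfl hv'.2.2.2]
          · exact absurd (hchildw _ ha) hv'.2.2.1
          · exact absurd ha (leaf_not_adj hx)
          · exact absurd ha (leaf_not_adj hy)
          · have hbp : b ≠ p := fun he => by
              rcases hchildp v' (he ▸ ha) with rfl | rfl
              exacts [hv'.2.1 rfl, hv'.2.2.2 rfl]
            have hbw : b ≠ w := fun he => hv'.2.2.1 (hchildw v' (he ▸ ha))
            exact Or.inr (hr.tail (Or.inl ⟨ha, hbw, hv'.2.1, hbp, hv'.1⟩))
      have hreachq : Relation.ReflTransGen N'.adj ρ q := by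
        rcases claim q (hreach q hqv) with (rfl | rfl | rfl | rfl) | h
        exacts [absurd rfl hqp', absurd rfl hqw, absurd rfl hqx, absurd rfl hqy, h]
      have hreachq' : Relation.ReflTransGen N'.adj ρ q' := by
        rcases claim q' (hreach q' hq'v) with (rfl | rfl | rfl | rfl) | h
        exacts [absurd rfl hq'p, absurd rfl hq'w', absurd rfl hq'x, absurd rfl hq'y, h]
      intro v hv
      have hv' : v ∈ N.verts ∧ v ≠ w ∧ v ≠ p := by
        simp only [N', Finset.mem_sdiff, Finset.mem_insert, Finset.mem_singleton, not_or] at hv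
        exact ⟨hv.1, hv.2⟩
      rcases eq_or_ne v x with rfl | hvx
      · exact hreachq'.tail (Or.inr (Or.inl ⟨rfl, rfl⟩))
      rcases eq_or_ne v y with rfl | hvy
      · exact hreachq.tail (Or.inr (Or.inr ⟨rfl, rfl⟩))
      rcases claim v (hreach v hv'.1) with (rfl | rfl | rfl | rfl) | h
      exacts [absurd rfl hv'.2.2, absurd rfl hv'.2.1, absurd rfl hvx, absurd rfl hvy, h]
    · -- classification
      intro v hv hvρ
      have hv' : v ∈ N.verts ∧ v ≠ w ∧ v ≠ p := by
        simp only [N', Finset.mem_sdiff, Finset.mem_insert, Finset.mem_singleton, not_or] at hv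
        exact ⟨hv.1, hv.2⟩
      rcases eq_or_ne v x with rfl | hvx
      · refine Or.inr (Or.inr ⟨hin_x, ?_⟩)
        rw [hout_same _ (Ne.symm hq'x) (Ne.symm hqx) hv'.2.1 hv'.2.2]
        exact hx.2
      rcases eq_or_ne v y with rfl | hvy
      · refine Or.inr (Or.inr ⟨hin_y, ?_⟩)
        rw [hout_same _ (Ne.symm hq'y) (Ne.symm hqy) hv'.2.1 hv'.2.2]
        exact hy.2
      rw [hin_same v hvx hvy hv'.2.1 hv'.2.2]
      rcases eq_or_ne v q with rfl | hvq
      · rw [houtq.1]; exact hclass v hv'.1 hvρ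
      rcases eq_or_ne v q' with rfl | hvq'
      · rw [houtq.2]; exact hclass v hv'.1 hvρ
      · rw [hout_same v hvq' hvq hv'.2.1 hv'.2.2]; exact hclass v hv'.1 hvρ
  · -- tree-child
    intro v hv hvout
    have hv' : v ∈ N.verts ∧ v ≠ w ∧ v ≠ p := by
      simp only [N', Finset.mem_sdiff, Finset.mem_insert, Finset.mem_singleton, not_or] at hv
      exact ⟨hv.1, hv.2⟩
    rcases eq_or_ne v q with rfl | hvq
    · exact ⟨y, Or.inr (Or.inr ⟨rfl, rfl⟩), by rw [hin_y]; norm_num⟩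
    rcases eq_or_ne v q' with rfl | hvq'
    · exact ⟨x, Or.inr (Or.inl ⟨rfl, rfl⟩), by rw [hin_x]; norm_num⟩
    · rw [hout_same v hvq' hvq hv'.2.1 hv'.2.2] at hvout
      obtain ⟨c, hvc, hc2⟩ := htc v hv'.1 hvout
      have hcw : c ≠ w := fun he => hc2 (he ▸ hw2 ▸ rfl)
      have hcp : c ≠ p := fun he => hvq (hparp v (he ▸ hvc))
      refine ⟨c, Or.inl ⟨hvc, hv'.2.1, hcw, hv'.2.2, hcp⟩, ?_⟩
      rcases eq_or_ne c x with rfl | hcx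
      · rw [hin_x]; norm_num
      rcases eq_or_ne c y with rfl | hcy
      · rw [hin_y]; norm_num
      · rw [hin_same c hcx hcy hcw hcp]; exact hc2
  · -- cardinality
    have hsub : ({w, p} : Finset ℕ) ⊆ N.verts := by
      intro z hz
      rcases Finset.mem_insert.1 hz with rfl | hz
      · exact hwv
      · rw [Finset.mem_singleton.1 hz]; exact hpv
    have hcard2 : ({w, p} : Finset ℕ).card = 2 := by
      rw [Finset.card_insert_of_notMem (by simpa using Ne.symm hpw'), Finset.card_singleton]
    have := Finset.card_sdiff_of_subset hsub
    have hle := Finset.card_le_card hsub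
    show (N.verts \ {w, p}).card + 2 = N.verts.card
    omega

end PNet
namespace PNet

lemma main_aux : ∀ n (N : PNet), N.verts.card ≤ n → N.IsBinary → N.TreeChild → N.Orchard := by
  intro n
  induction n with
  | zero =>
    intro N hcard hbin _
    obtain ⟨_, ρ, hρroot, _⟩ := hbin
    have := Finset.card_pos.2 ⟨ρ, hρroot.1⟩
    omega
  | succ n ih =>
    intro N hcard hbin htc
    rcases exists_pick hbin htc with
        ⟨x, y, p, h1, h2, h3, h4, h5, h6⟩ |
        ⟨x, y, p, q, h1, h2, h3, h4, h5, h6, h7⟩ |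
        ⟨x, y, w, p, q', q, h1, h2, h3, h4, h5, h6, h7, h8, h9, h10, h11⟩
    · obtain ⟨T, hT, hcp⟩ := base_step hbin h1 h2 h3 h4 h5 h6
      exact ⟨T, hT, Relation.ReflTransGen.single (Or.inl hcp)⟩
    · obtain ⟨N', hcp, hbin', htc', hcard'⟩ := cherry_step hbin htc h1 h2 h3 h4 h5 h6 h7
      obtain ⟨T, hT, hr⟩ := ih N' (by omega) hbin' htc'
      exact ⟨T, hT, Relation.ReflTransGen.head (Or.inl hcp) hr⟩
    · obtain ⟨N', hcp, hbin', htc', hcard'⟩ :=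
        retcherry_step hbin htc h1 h2 h3 h4 h5 h6 h7 h8 h9 h10 h11
      obtain ⟨T, hT, hr⟩ := ih N' (by omega) hbin' htc'
      exact ⟨T, hT, Relation.ReflTransGen.head (Or.inr hcp) hr⟩

end PNet

open PNet in
/-- Every binary tree-child phylogenetic network is orchard. -/
theorem stmt4 (N : PNet) (hbin : N.IsBinary) (htc : N.TreeChild) :
    N.Orchard :=
  main_aux N.verts.card N (le_refl _) hbin htc
end

section
/- Every binary stack-free phylogenetic network is tree-based: it admits a spanning tree (as a subgraph, after suppressing degree-2 nodes) whose leaf set equals the leaf set of the network. -/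
namespace PNet

/-- Tree-based: `N` has a rooted spanning tree (a subgraph in which every
non-root vertex has a unique parent) all of whose leaves are leaves of `N`. -/
def TreeBased (N : PNet) : Prop :=
  ∃ S : ℕ → ℕ → Prop,
    (∀ u v, S u v → N.adj u v) ∧
    (∀ v ∈ N.verts, 0 < N.indeg v → ∃! u, S u v) ∧
    (∀ v ∈ N.verts, N.indeg v = 0 → ∀ u, ¬ S u v) ∧
    (∀ v ∈ N.verts, (∀ w, ¬ S v w) → N.outdeg v = 0)

end PNet

open PNet in
/-- Every binary stack-free phylogenetic network is tree-based. -/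
theorem stmt5 (N : PNet) (hbin : N.IsBinary) (hsf : N.StackFree) :
    N.TreeBased := by
  classical
  obtain ⟨hac, ρ, hρroot, hρout, hreach, hclass⟩ := hbin
  -- basic fact: an edge into v forces positive in-degree
  have hpos : ∀ u v, N.adj u v → 0 < N.indeg v := by
    intro u v h
    have hm := N.adj_mem u v h
    exact Finset.card_pos.mpr ⟨u, Finset.mem_filter.mpr ⟨hm.1, h⟩⟩
  -- the set of "problem" nodes: non-reticulation internal nodes all of whose
  -- children are reticulations
  set P : Finset ℕ := N.verts.filter
    (fun v => N.indeg v ≠ 2 ∧ N.outdeg v ≠ 0 ∧ ∀ w, N.adj v w → N.indeg w = 2) with hP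
  set C : ℕ → Finset ℕ := fun v => N.verts.filter (fun w => N.adj v w) with hC
  have hCcard : ∀ v, (C v).card = N.outdeg v := fun v => rfl
  have hCadj : ∀ v w, w ∈ C v → N.adj v w := by
    intro v w hw; exact (Finset.mem_filter.mp hw).2
  -- every problem node has out-degree 2
  have hPout : ∀ p ∈ P, N.outdeg p = 2 := by
    intro p hp
    obtain ⟨hpv, hpi, hpo, _⟩ := Finset.mem_filter.mp hp
    by_cases hpρ : p = ρ
    · rw [hpρ]; exact hρout
    · rcases hclass p hpv hpρ with h | h | h
      · exact h.2
      · exact absurd h.1 hpi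
      · exact absurd h.2 hpo
  -- Hall's condition for the bipartite graph between problem nodes and their
  -- (reticulation) children
  have hall : ∀ s : Finset {x // x ∈ P},
      s.card ≤ (s.biUnion fun p => C p.val).card := by
    intro s
    set U := s.biUnion fun p => C p.val with hU
    have key : s.card * 2 ≤ U.card * 2 := by
      apply Finset.card_mul_le_card_mul (fun (p : {x // x ∈ P}) w => N.adj p.val w)
      · intro a ha
        simp only [Finset.bipartiteAbove]
        have hsub : C a.val ⊆ U.filter (fun w => N.adj a.val w) := by
          intro w hw
          exact Finset.mem_filter.mpr ⟨Finset.mem_biUnion.mpr ⟨a, ha, hw⟩, hCadj _ _ hw⟩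
        have h2 : 2 ≤ (C a.val).card := by rw [hCcard, hPout a.val a.property]
        exact h2.trans (Finset.card_le_card hsub)
      · intro w hw
        simp only [Finset.bipartiteBelow]
        obtain ⟨p, hps, hpw⟩ := Finset.mem_biUnion.mp hw
        have hwret : N.indeg w = 2 := by
          obtain ⟨_, _, _, hall2⟩ := Finset.mem_filter.mp p.property
          exact hall2 w (hCadj _ _ hpw)
        have hmap : ∀ q ∈ s.filter (fun p : {x // x ∈ P} => N.adj p.val w),
            (fun q : {x // x ∈ P} => q.val) q ∈ N.verts.filter (fun u => N.adj u w) := by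
          intro q hq
          have hq2 := (Finset.mem_filter.mp hq).2
          exact Finset.mem_filter.mpr ⟨(N.adj_mem _ _ hq2).1, hq2⟩
        have hle := Finset.card_le_card_of_injOn (fun q : {x // x ∈ P} => q.val) hmap
          (fun a _ b _ hab => Subtype.ext hab)
        have heq : (N.verts.filter (fun u => N.adj u w)).card = 2 := hwret
        exact le_of_le_of_eq hle heq
    omega
  obtain ⟨f, hfinj, hfmem⟩ :=
    (Finset.all_card_le_biUnion_card_iff_existsInjective' fun p : {x // x ∈ P} => C p.val).mp hall
  -- the chosen parent of each reticulation
  set c : ℕ → ℕ := fun r =>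
    if h : ∃ p : {x // x ∈ P}, f p = r then (Classical.choose h).val
    else if h2 : ∃ u, N.adj u r then Classical.choose h2
    else 0 with hc
  have hcadj : ∀ r, 0 < N.indeg r → N.adj (c r) r := by
    intro r hr
    by_cases h : ∃ p : {x // x ∈ P}, f p = r
    · have h1 : c r = (Classical.choose h).val := dif_pos h
      rw [h1]
      have hmem := hfmem (Classical.choose h)
      rw [Classical.choose_spec h] at hmem
      exact hCadj _ _ hmem
    · obtain ⟨u, hu⟩ := Finset.card_pos.mp hr
      have hu2 := (Finset.mem_filter.mp hu).2
      have h2 : ∃ u, N.adj u r := ⟨u, hu2⟩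
      have h1 : c r = Classical.choose h2 := by
        rw [show c r = if h2 : ∃ u, N.adj u r then Classical.choose h2 else 0 from dif_neg h]
        exact dif_pos h2
      rw [h1]
      exact Classical.choose_spec h2
  -- the spanning tree
  refine ⟨fun u v => N.adj u v ∧ (N.indeg v = 2 → u = c v), fun u v h => h.1, ?_, ?_, ?_⟩
  · -- unique parents
    intro v hv hvpos
    by_cases h2 : N.indeg v = 2
    · refine ⟨c v, ⟨hcadj v hvpos, fun _ => rfl⟩, fun u hu => hu.2 h2⟩
    · -- in-degree is 1
      have h1 : N.indeg v = 1 := by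
        have hvρ : v ≠ ρ := by
          rintro rfl; rw [hρroot.2] at hvpos; exact absurd hvpos (lt_irrefl 0)
        rcases hclass v hv hvρ with h | h | h
        · exact h.1
        · exact absurd h.1 h2
        · exact h.1
      obtain ⟨u, hu⟩ := Finset.card_eq_one.mp h1
      have humem : u ∈ N.verts.filter (fun x => N.adj x v) := by rw [hu]; exact Finset.mem_singleton_self u
      refine ⟨u, ⟨(Finset.mem_filter.mp humem).2, fun hh => absurd hh h2⟩, ?_⟩
      intro u' hu'
      have : u' ∈ N.verts.filter (fun x => N.adj x v) :=
        Finset.mem_filter.mpr ⟨(N.adj_mem _ _ hu'.1).1, hu'.1⟩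
      rw [hu] at this; exact Finset.mem_singleton.mp this
  · -- no parent of an in-degree-0 node
    intro v hv hv0 u hu
    have := hpos u v hu.1
    omega
  · -- every internal node has a child in the tree
    intro v hv hnone
    by_contra hvo
    -- v has a child
    have hch : ∃ w, N.adj v w := by
      have : 0 < N.outdeg v := Nat.pos_of_ne_zero hvo
      obtain ⟨w, hw⟩ := Finset.card_pos.mp this
      exact ⟨w, (Finset.mem_filter.mp hw).2⟩
    -- all children of v must be reticulations (else S v w for a non-retic child)
    have hallret : ∀ w, N.adj v w → N.indeg w = 2 := by
      intro w hw
      by_contra hwr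
      exact hnone w ⟨hw, fun h => absurd h hwr⟩
    -- v is not a reticulation (stack-free)
    have hvnr : N.indeg v ≠ 2 := by
      intro hv2
      obtain ⟨w, hw⟩ := hch
      exact hsf v w hw ⟨hv2, hallret w hw⟩
    -- so v is a problem node
    have hvP : v ∈ P := Finset.mem_filter.mpr ⟨hv, hvnr, hvo, hallret⟩
    set r := f ⟨v, hvP⟩ with hr
    have hrmem : r ∈ C v := hfmem ⟨v, hvP⟩
    have hradj : N.adj v r := hCadj _ _ hrmem
    have hex : ∃ p : {x // x ∈ P}, f p = r := ⟨⟨v, hvP⟩, rfl⟩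
    have hcr : c r = v := by
      have h1 : c r = (Classical.choose hex).val := dif_pos hex
      have h2 : Classical.choose hex = ⟨v, hvP⟩ := hfinj (by rw [Classical.choose_spec hex])
      rw [h1, h2]
    exact hnone r ⟨hradj, fun _ => hcr.symm⟩
end

section
/- Every binary phylogenetic network can be generated from the single-leaf network by a finite sequence of speciation events and y-type merging events. A speciation event replaces a leaf by a tree node with two new leaf children; a y-type merging event replaces two distinct leaves x and y by a reticulation node with in-edges from the former parents of x and y and a single new leaf child. -/
namespace PNet

/-- The network consisting of a single leaf (one vertex, no edges). -/
def SingleLeaf (N : PNet) : Prop := ∃ v, N.verts = {v} ∧ ∀ u w, ¬ N.adj u w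

/-- Speciation event: a leaf `x` is replaced by a tree node with two new leaf
children `a` and `b`. -/
def Speciation (N N' : PNet) : Prop :=
  ∃ x a b, N.IsLeaf x ∧ a ∉ N.verts ∧ b ∉ N.verts ∧ a ≠ b ∧
    N'.verts = insert a (insert b N.verts) ∧
    ∀ u v, N'.adj u v ↔ (N.adj u v ∨ (u = x ∧ v = a) ∨ (u = x ∧ v = b))

/-- y-type merging event: two distinct leaves `x` and `y` (with distinct
parents) are glued into a reticulation node with in-edges from the former
parents of `x` and `y` and a single new leaf child `z`. -/
def YMerge (N N' : PNet) : Prop :=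
  ∃ x y z px py, x ≠ y ∧ N.IsLeaf x ∧ N.IsLeaf y ∧ z ∉ N.verts ∧
    N.adj px x ∧ N.adj py y ∧ px ≠ py ∧
    N'.verts = insert z (N.verts \ {y}) ∧
    ∀ u v, N'.adj u v ↔
      ((N.adj u v ∧ v ≠ y) ∨ (u = py ∧ v = x) ∨ (u = x ∧ v = z))

/-- n-type (HGT) reticulation event: subdivide the pendant edges above two
distinct leaves `x` and `y` with new nodes `u₀` and `v₀` and add the arc
`(u₀, v₀)`, making `v₀` a reticulation node; `x` and `y` remain leaves. -/
def HGT (N N' : PNet) : Prop :=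
  ∃ x y u₀ v₀ px py, x ≠ y ∧ N.IsLeaf x ∧ N.IsLeaf y ∧
    N.adj px x ∧ N.adj py y ∧
    u₀ ∉ N.verts ∧ v₀ ∉ N.verts ∧ u₀ ≠ v₀ ∧
    N'.verts = insert u₀ (insert v₀ N.verts) ∧
    ∀ a b, N'.adj a b ↔
      ((N.adj a b ∧ b ≠ x ∧ b ≠ y) ∨ (a = px ∧ b = u₀) ∨ (a = py ∧ b = v₀) ∨
        (a = u₀ ∧ b = x) ∨ (a = v₀ ∧ b = y) ∨ (a = u₀ ∧ b = v₀))

/-- m-type hybrid-speciation event: two distinct leaves `x` and `y` each become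
tree nodes, with new leaf children `x'` resp. `y'` and with edges into a shared
new reticulation node `w`, which has a single new leaf child `z`. -/
def MType (N N' : PNet) : Prop :=
  ∃ x y x' y' w z, x ≠ y ∧ N.IsLeaf x ∧ N.IsLeaf y ∧
    x' ∉ N.verts ∧ y' ∉ N.verts ∧ w ∉ N.verts ∧ z ∉ N.verts ∧
    x' ≠ y' ∧ x' ≠ w ∧ x' ≠ z ∧ y' ≠ w ∧ y' ≠ z ∧ w ≠ z ∧
    N'.verts = insert x' (insert y' (insert w (insert z N.verts))) ∧
    ∀ a b, N'.adj a b ↔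
      (N.adj a b ∨ (a = x ∧ b = x') ∨ (a = x ∧ b = w) ∨
        (a = y ∧ b = y') ∨ (a = y ∧ b = w) ∨ (a = w ∧ b = z))

/-- Extinction event: delete a leaf `x` and suppress its resulting degree-two
parent `p` (when `p` is not the root). -/
def Extinct (N N' : PNet) : Prop :=
  ∃ x p c, N.IsLeaf x ∧ N.adj p x ∧ N.adj p c ∧ c ≠ x ∧
    ((N.indeg p = 0 ∧ N'.verts = N.verts \ {x} ∧
        ∀ u v, N'.adj u v ↔ (N.adj u v ∧ v ≠ x)) ∨
     (∃ q, N.adj q p ∧ N'.verts = N.verts \ {x, p} ∧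
        ∀ u v, N'.adj u v ↔
          ((N.adj u v ∧ u ≠ p ∧ v ≠ p ∧ v ≠ x) ∨ (u = q ∧ v = c))))

/-- Isomorphism of (leaf-unlabelled) network topologies. -/
def Iso (M N : PNet) : Prop :=
  ∃ f : ℕ → ℕ, Set.BijOn f ↑M.verts ↑N.verts ∧
    ∀ u v, u ∈ M.verts → v ∈ M.verts → (M.adj u v ↔ N.adj (f u) (f v))


-- ===== auxiliary lemmas =====

lemma adj_irrefl {N : PNet} (hac : N.Acyclic) (v : ℕ) : ¬ N.adj v v :=
  fun h => hac v (Relation.TransGen.single h)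

lemma out_mem_iff {N : PNet} {v w : ℕ} :
    w ∈ N.verts.filter (fun t => N.adj v t) ↔ N.adj v w := by
  simp only [Finset.mem_filter]
  exact ⟨fun h => h.2, fun h => ⟨(N.adj_mem v w h).2, h⟩⟩

lemma in_mem_iff {N : PNet} {v u : ℕ} :
    u ∈ N.verts.filter (fun t => N.adj t v) ↔ N.adj u v := by
  simp only [Finset.mem_filter]
  exact ⟨fun h => h.2, fun h => ⟨(N.adj_mem u v h).1, h⟩⟩

lemma outdeg_eq_card {N : PNet} {v : ℕ} {s : Finset ℕ}
    (h : ∀ w, N.adj v w ↔ w ∈ s) : N.outdeg v = s.card := by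
  unfold outdeg
  congr 1
  ext w
  rw [out_mem_iff]
  exact h w

lemma indeg_eq_card {N : PNet} {v : ℕ} {s : Finset ℕ}
    (h : ∀ u, N.adj u v ↔ u ∈ s) : N.indeg v = s.card := by
  unfold indeg
  congr 1
  ext u
  rw [in_mem_iff]
  exact h u

lemma outdeg_zero_iff {N : PNet} {v : ℕ} : N.outdeg v = 0 ↔ ∀ w, ¬ N.adj v w := by
  constructor
  · intro h w hw
    have hm : w ∈ N.verts.filter (fun t => N.adj v t) := out_mem_iff.mpr hw
    have := Finset.card_pos.mpr ⟨w, hm⟩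
    unfold outdeg at h; omega
  · intro h
    have := outdeg_eq_card (N := N) (v := v) (s := ∅) (fun w => by simp [h w])
    simpa using this

lemma indeg_zero_iff {N : PNet} {v : ℕ} : N.indeg v = 0 ↔ ∀ u, ¬ N.adj u v := by
  constructor
  · intro h u hu
    have hm : u ∈ N.verts.filter (fun t => N.adj t v) := in_mem_iff.mpr hu
    have := Finset.card_pos.mpr ⟨u, hm⟩
    unfold indeg at h; omega
  · intro h
    have := indeg_eq_card (N := N) (v := v) (s := ∅) (fun u => by simp [h u])
    simpa using this

lemma outdeg_one {N : PNet} {v : ℕ} (h : N.outdeg v = 1) :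
    ∃ a, N.adj v a ∧ ∀ t, N.adj v t → t = a := by
  unfold outdeg at h
  obtain ⟨a, ha⟩ := Finset.card_eq_one.mp h
  refine ⟨a, ?_, ?_⟩
  · exact out_mem_iff.mp (ha ▸ Finset.mem_singleton_self a)
  · intro t ht
    have := out_mem_iff.mpr ht
    rw [ha, Finset.mem_singleton] at this
    exact this

lemma indeg_one {N : PNet} {v : ℕ} (h : N.indeg v = 1) :
    ∃ a, N.adj a v ∧ ∀ t, N.adj t v → t = a := by
  unfold indeg at h
  obtain ⟨a, ha⟩ := Finset.card_eq_one.mp h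
  refine ⟨a, ?_, ?_⟩
  · exact in_mem_iff.mp (ha ▸ Finset.mem_singleton_self a)
  · intro t ht
    have := in_mem_iff.mpr ht
    rw [ha, Finset.mem_singleton] at this
    exact this

lemma outdeg_two {N : PNet} {v : ℕ} (h : N.outdeg v = 2) :
    ∃ a b, a ≠ b ∧ N.adj v a ∧ N.adj v b ∧ ∀ t, N.adj v t → t = a ∨ t = b := by
  unfold outdeg at h
  obtain ⟨a, b, hab, hs⟩ := Finset.card_eq_two.mp h
  refine ⟨a, b, hab, ?_, ?_, ?_⟩
  · exact out_mem_iff.mp (hs ▸ Finset.mem_insert_self a {b})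
  · exact out_mem_iff.mp (hs ▸ Finset.mem_insert_of_mem (Finset.mem_singleton_self b))
  · intro t ht
    have := out_mem_iff.mpr ht
    rw [hs] at this
    simpa using this

lemma indeg_two {N : PNet} {v : ℕ} (h : N.indeg v = 2) :
    ∃ a b, a ≠ b ∧ N.adj a v ∧ N.adj b v ∧ ∀ t, N.adj t v → t = a ∨ t = b := by
  unfold indeg at h
  obtain ⟨a, b, hab, hs⟩ := Finset.card_eq_two.mp h
  refine ⟨a, b, hab, ?_, ?_, ?_⟩
  · exact in_mem_iff.mp (hs ▸ Finset.mem_insert_self a {b})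
  · exact in_mem_iff.mp (hs ▸ Finset.mem_insert_of_mem (Finset.mem_singleton_self b))
  · intro t ht
    have := in_mem_iff.mpr ht
    rw [hs] at this
    simpa using this

lemma outdeg_congr {N M : PNet} {v : ℕ} (h : ∀ w, N.adj v w ↔ M.adj v w) :
    N.outdeg v = M.outdeg v :=
  outdeg_eq_card (fun w => (h w).trans out_mem_iff.symm)

lemma indeg_congr {N M : PNet} {v : ℕ} (h : ∀ u, N.adj u v ↔ M.adj u v) :
    N.indeg v = M.indeg v :=
  indeg_eq_card (fun u => (h u).trans in_mem_iff.symm)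

lemma outdeg_le {N M : PNet} {v : ℕ} (h : ∀ w, N.adj v w → M.adj v w) :
    N.outdeg v ≤ M.outdeg v := by
  apply Finset.card_le_card
  intro w hw
  exact out_mem_iff.mpr (h w (out_mem_iff.mp hw))

/-- total number of edges, counted as sum of out-degrees -/
def ecount (N : PNet) : ℕ := ∑ v ∈ N.verts, N.outdeg v

lemma exists_maximal (N : PNet) (hac : N.Acyclic) (S : Finset ℕ) (hS : S.Nonempty) :
    ∃ v ∈ S, ∀ t ∈ S, ¬ Relation.TransGen N.adj v t := by
  classical
  obtain ⟨v, hv, hmin⟩ := S.exists_min_image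
    (fun v => (S.filter (fun t => Relation.TransGen N.adj v t)).card) hS
  refine ⟨v, hv, fun t ht htg => ?_⟩
  have hsub : S.filter (fun s => Relation.TransGen N.adj t s) ⊂
      S.filter (fun s => Relation.TransGen N.adj v s) := by
    refine Finset.ssubset_iff_of_subset ?_ |>.mpr ?_
    · intro s hs
      rw [Finset.mem_filter] at hs ⊢
      exact ⟨hs.1, htg.trans hs.2⟩
    · exact ⟨t, Finset.mem_filter.mpr ⟨ht, htg⟩, fun hmem =>
        hac t (Finset.mem_filter.mp hmem).2⟩
  exact absurd (hmin t ht) (by have := Finset.card_lt_card hsub; omega)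

lemma rtg_to_tg {r : ℕ → ℕ → Prop} {a b : ℕ} (h : Relation.ReflTransGen r a b)
    (hne : a ≠ b) : Relation.TransGen r a b := by
  rcases h.cases_head with rfl | ⟨c, hc, hcb⟩
  · exact absurd rfl hne
  · exact Relation.TransGen.head' hc hcb


lemma gen_main : ∀ (n : ℕ) (N : PNet), N.ecount ≤ n → N.IsBinary →
    ∃ N₀, SingleLeaf N₀ ∧
      Relation.ReflTransGen (fun A B => Speciation A B ∨ YMerge A B) N₀ N := by
  intro n
  induction n with
  | zero =>
    intro N hle hbin
    exfalso
    obtain ⟨_, ρ, ⟨hρv, _⟩, hρout, _, _⟩ := hbin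
    have h1 : N.outdeg ρ ≤ N.ecount :=
      Finset.single_le_sum (f := fun v => N.outdeg v) (fun i _ => Nat.zero_le _) hρv
    omega
  | succ n ih =>
    intro N hle hbin
    obtain ⟨hac, ρ, ⟨hρv, hρin⟩, hρout, hreach, hdeg⟩ := hbin
    classical
    set S : Finset ℕ := N.verts.filter (fun v => N.outdeg v ≠ 0) with hSdef
    have hρS : ρ ∈ S := Finset.mem_filter.mpr ⟨hρv, by omega⟩
    obtain ⟨v, hvS, hmax⟩ := exists_maximal N hac S ⟨ρ, hρS⟩
    obtain ⟨hvverts, hvout⟩ := Finset.mem_filter.mp hvS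
    -- every child of v is a leaf
    have hchild : ∀ w, N.adj v w → N.outdeg w = 0 := by
      intro w hw
      by_contra hne
      exact hmax w (Finset.mem_filter.mpr ⟨(N.adj_mem v w hw).2, hne⟩)
        (Relation.TransGen.single hw)
    by_cases hvρ : v = ρ
    · -- base case : N is the root with two leaf children
      subst hvρ
      obtain ⟨t1, t2, ht12, hρt1, hρt2, htuniq⟩ := outdeg_two hρout
      have ht1v : t1 ∈ N.verts := (N.adj_mem v t1 hρt1).2
      have ht2v : t2 ∈ N.verts := (N.adj_mem v t2 hρt2).2
      have ht1ρ : t1 ≠ v := fun h => adj_irrefl hac v (h ▸ hρt1)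
      have ht2ρ : t2 ≠ v := fun h => adj_irrefl hac v (h ▸ hρt2)
      -- all vertices are v, t1 or t2
      have hall : ∀ u ∈ N.verts, u = v ∨ u = t1 ∨ u = t2 := by
        intro u hu
        by_cases huρ : u = v
        · exact Or.inl huρ
        · have huS : u ∉ S := fun hS' =>
            hmax u hS' (rtg_to_tg (hreach u hu) (Ne.symm huρ))
          have huout : N.outdeg u = 0 := by
            by_contra h
            exact huS (Finset.mem_filter.mpr ⟨hu, h⟩)
          rcases hdeg u hu huρ with ⟨_, h2⟩ | ⟨_, h1⟩ | ⟨h1, _⟩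
          · omega
          · omega
          · obtain ⟨p, hp, hpu⟩ := indeg_one h1
            have hpS : p ∈ S := Finset.mem_filter.mpr ⟨(N.adj_mem p u hp).1, by
              intro h0
              exact outdeg_zero_iff.mp h0 u hp⟩
            have hpρ : p = v := by
              by_contra hne
              exact hmax p hpS (rtg_to_tg (hreach p (N.adj_mem p u hp).1) (Ne.symm hne))
            subst hpρ
            exact Or.inr (htuniq u hp)
      refine ⟨⟨{v}, fun _ _ => False, fun _ _ => inferInstance,
        fun u w h => h.elim⟩, ⟨v, rfl, fun _ _ h => h⟩,
        Relation.ReflTransGen.single (Or.inl ?_)⟩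
      refine ⟨v, t1, t2, ⟨Finset.mem_singleton_self v, ?_⟩, ?_, ?_, ht12, ?_, ?_⟩
      · exact outdeg_zero_iff.mpr (fun w h => h)
      · simpa using ht1ρ
      · simpa using ht2ρ
      · ext u
        simp only [Finset.mem_insert, Finset.mem_singleton]
        constructor
        · intro hu
          rcases hall u hu with rfl | rfl | rfl
          · tauto
          · tauto
          · tauto
        · rintro (rfl | rfl | rfl)
          · exact ht1v
          · exact ht2v
          · exact hρv
      · intro u w
        constructor
        · intro h
          rcases hall u (N.adj_mem u w h).1 with h1 | h1 | h1
          · subst h1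
            rcases htuniq w h with rfl | rfl
            · tauto
            · tauto
          · rw [h1] at h
            exact absurd h (outdeg_zero_iff.mp (hchild t1 hρt1) w)
          · rw [h1] at h
            exact absurd h (outdeg_zero_iff.mp (hchild t2 hρt2) w)
        · rintro (h | ⟨rfl, rfl⟩ | ⟨rfl, rfl⟩)
          · exact h.elim
          · exact hρt1
          · exact hρt2
    · rcases hdeg v hvverts hvρ with ⟨hin1, hout2⟩ | ⟨hin2, hout1⟩ | ⟨_, hout0⟩
      · -- cherry case: reverse speciation
        obtain ⟨c1, c2, hc12, hvc1, hvc2, hcuniq⟩ := outdeg_two hout2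
        have hc1v : c1 ∈ N.verts := (N.adj_mem v c1 hvc1).2
        have hc2v : c2 ∈ N.verts := (N.adj_mem v c2 hvc2).2
        have hc1out : N.outdeg c1 = 0 := hchild c1 hvc1
        have hc2out : N.outdeg c2 = 0 := hchild c2 hvc2
        have hc1ρ : c1 ≠ ρ := fun h => by rw [h] at hc1out; omega
        have hc2ρ : c2 ≠ ρ := fun h => by rw [h] at hc2out; omega
        have hc1ne : c1 ≠ v := fun h => by rw [h] at hc1out; omega
        have hc2ne : c2 ≠ v := fun h => by rw [h] at hc2out; omega
        -- unique parents of c1 and c2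
        have hpar1 : ∀ u, N.adj u c1 → u = v := by
          rcases hdeg c1 hc1v hc1ρ with ⟨_, h2⟩ | ⟨_, h1⟩ | ⟨h1, _⟩
          · omega
          · omega
          · obtain ⟨p, hp, hpu⟩ := indeg_one h1
            have := hpu v hvc1
            subst this
            exact hpu
        have hpar2 : ∀ u, N.adj u c2 → u = v := by
          rcases hdeg c2 hc2v hc2ρ with ⟨_, h2⟩ | ⟨_, h1⟩ | ⟨h1, _⟩
          · omega
          · omega
          · obtain ⟨p, hp, hpu⟩ := indeg_one h1
            have := hpu v hvc2
            subst this
            exact hpu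
        -- the predecessor network
        set P : PNet :=
          { verts := N.verts \ {c1, c2}
            adj := fun u w => N.adj u w ∧ w ≠ c1 ∧ w ≠ c2
            adjDec := fun u w => inferInstance
            adj_mem := by
              rintro u w ⟨h, h1, h2⟩
              have hu : u ∈ N.verts := (N.adj_mem u w h).1
              have hw : w ∈ N.verts := (N.adj_mem u w h).2
              refine ⟨Finset.mem_sdiff.mpr ⟨hu, ?_⟩, Finset.mem_sdiff.mpr ⟨hw, by simp [h1, h2]⟩⟩
              simp only [Finset.mem_insert, Finset.mem_singleton]
              rintro (rfl | rfl)
              · exact outdeg_zero_iff.mp hc1out w h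
              · exact outdeg_zero_iff.mp hc2out w h } with hPdef
        have hPverts : ∀ u, u ∈ P.verts ↔ u ∈ N.verts ∧ u ≠ c1 ∧ u ≠ c2 := by
          intro u
          simp [hPdef, Finset.mem_sdiff]
        have hPadj : ∀ u w, P.adj u w ↔ N.adj u w ∧ w ≠ c1 ∧ w ≠ c2 := fun u w => Iff.rfl
        have hvP : v ∈ P.verts := (hPverts v).mpr ⟨hvverts, Ne.symm hc1ne, Ne.symm hc2ne⟩
        have hvout0 : P.outdeg v = 0 := by
          rw [outdeg_zero_iff]
          rintro w ⟨h, h1, h2⟩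
          rcases hcuniq w h with rfl | rfl
          · exact h1 rfl
          · exact h2 rfl
        -- Speciation P N
        have hspec : Speciation P N := by
          refine ⟨v, c1, c2, ⟨hvP, hvout0⟩, ?_, ?_, hc12, ?_, ?_⟩
          · rw [hPverts]; tauto
          · rw [hPverts]; tauto
          · ext u
            rw [Finset.mem_insert, Finset.mem_insert, hPverts]
            constructor
            · intro hu
              by_cases h1 : u = c1
              · tauto
              · by_cases h2 : u = c2 <;> tauto
            · rintro (rfl | rfl | ⟨h, _, _⟩)
              · exact hc1v
              · exact hc2v
              · exact h
          · intro u w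
            rw [hPadj]
            constructor
            · intro h
              by_cases h1 : w = c1
              · subst h1; exact Or.inr (Or.inl ⟨hpar1 u h, rfl⟩)
              · by_cases h2 : w = c2
                · subst h2; exact Or.inr (Or.inr ⟨hpar2 u h, rfl⟩)
                · exact Or.inl ⟨h, h1, h2⟩
            · rintro (⟨h, _, _⟩ | ⟨rfl, rfl⟩ | ⟨rfl, rfl⟩)
              · exact h
              · exact hvc1
              · exact hvc2
        -- degrees are preserved away from v
        have hincongr : ∀ w, w ≠ c1 → w ≠ c2 → P.indeg w = N.indeg w := by
          intro w h1 h2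
          refine indeg_congr (fun u => ?_)
          rw [hPadj]
          exact ⟨fun h => h.1, fun h => ⟨h, h1, h2⟩⟩
        have houtcongr : ∀ w, w ≠ v → P.outdeg w = N.outdeg w := by
          intro w hwv
          refine outdeg_congr (fun t => ?_)
          rw [hPadj]
          refine ⟨fun h => h.1, fun h => ⟨h, ?_, ?_⟩⟩
          · rintro rfl; exact hwv (hpar1 w h)
          · rintro rfl; exact hwv (hpar2 w h)
        -- P is binary
        have hPbin : P.IsBinary := by
          refine ⟨?_, ρ, ⟨?_, ?_⟩, ?_, ?_, ?_⟩
          · intro a h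
            exact hac a ((Relation.TransGen.mono (fun x y (hxy : P.adj x y) => hxy.1) :
              Relation.TransGen P.adj ≤ Relation.TransGen N.adj) a a h)
          · exact (hPverts ρ).mpr ⟨hρv, Ne.symm hc1ρ, Ne.symm hc2ρ⟩
          · rw [hincongr ρ (Ne.symm hc1ρ) (Ne.symm hc2ρ)]; exact hρin
          · rw [houtcongr ρ (fun h => hvρ h.symm)]; exact hρout
          · -- reachability
            have hconv : ∀ w, Relation.ReflTransGen N.adj ρ w → w ≠ c1 → w ≠ c2 →
                Relation.ReflTransGen P.adj ρ w := by
              intro w h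
              induction h with
              | refl => intro _ _; exact Relation.ReflTransGen.refl
              | tail hb hstep ih2 =>
                intro hw1 hw2
                rename_i b w'
                have hb1 : b ≠ c1 := fun h => outdeg_zero_iff.mp hc1out _ (h ▸ hstep)
                have hb2 : b ≠ c2 := fun h => outdeg_zero_iff.mp hc2out _ (h ▸ hstep)
                exact (ih2 hb1 hb2).tail ((hPadj _ _).mpr ⟨hstep, hw1, hw2⟩)
            intro w hw
            rw [hPverts] at hw
            exact hconv w (hreach w hw.1) hw.2.1 hw.2.2
          · intro w hw hwρ
            rw [hPverts] at hw
            by_cases hwv : w = v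
            · subst hwv
              refine Or.inr (Or.inr ⟨?_, hvout0⟩)
              rw [hincongr w hw.2.1 hw.2.2]; exact hin1
            · rw [hincongr w hw.2.1 hw.2.2, houtcongr w hwv]
              exact hdeg w hw.1 hwρ
        -- edge count decreases
        have hlt : P.ecount < N.ecount := by
          unfold ecount
          have h1 : ∑ w ∈ P.verts, P.outdeg w < ∑ w ∈ P.verts, N.outdeg w := by
            refine Finset.sum_lt_sum (fun i _ => ?_) ⟨v, hvP, ?_⟩
            · exact outdeg_le (fun t ht => ht.1)
            · rw [hvout0, hout2]; omega
          have h2 : ∑ w ∈ P.verts, N.outdeg w ≤ ∑ w ∈ N.verts, N.outdeg w :=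
            Finset.sum_le_sum_of_subset (by rw [hPdef]; exact Finset.sdiff_subset)
          omega
        obtain ⟨N₀, hN₀, hchain⟩ := ih P (by omega) hPbin
        exact ⟨N₀, hN₀, hchain.tail (Or.inl hspec)⟩
      · -- reticulation case: reverse y-merge
        obtain ⟨z, hvz, hzuniq⟩ := outdeg_one hout1
        have hzv : z ∈ N.verts := (N.adj_mem v z hvz).2
        have hzout : N.outdeg z = 0 := hchild z hvz
        have hzρ : z ≠ ρ := fun h => by rw [h] at hzout; omega
        have hzne : z ≠ v := fun h => by rw [h] at hzout; omega
        have hparz : ∀ u, N.adj u z → u = v := by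
          rcases hdeg z hzv hzρ with ⟨_, h2⟩ | ⟨_, h1⟩ | ⟨h1, _⟩
          · omega
          · omega
          · obtain ⟨p, hp, hpu⟩ := indeg_one h1
            have := hpu v hvz
            subst this
            exact hpu
        obtain ⟨p1, p2, hp12, hp1v, hp2v, hpuniq⟩ := indeg_two hin2
        have hp1verts : p1 ∈ N.verts := (N.adj_mem p1 v hp1v).1
        have hp2verts : p2 ∈ N.verts := (N.adj_mem p2 v hp2v).1
        have hp1ne : p1 ≠ v := fun h => adj_irrefl hac v (h ▸ hp1v)
        have hp2ne : p2 ≠ v := fun h => adj_irrefl hac v (h ▸ hp2v)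
        have hp1z : p1 ≠ z := fun h => outdeg_zero_iff.mp hzout v (h ▸ hp1v)
        have hp2z : p2 ≠ z := fun h => outdeg_zero_iff.mp hzout v (h ▸ hp2v)
        obtain ⟨y, hy⟩ := Infinite.exists_notMem_finset N.verts
        have hyv : y ≠ v := fun h => hy (h ▸ hvverts)
        have hyz : y ≠ z := fun h => hy (h ▸ hzv)
        have hyp1 : y ≠ p1 := fun h => hy (h ▸ hp1verts)
        have hyp2 : y ≠ p2 := fun h => hy (h ▸ hp2verts)
        have hyρ : y ≠ ρ := fun h => hy (h ▸ hρv)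
        -- the predecessor network
        set P : PNet :=
          { verts := insert y (N.verts \ {z})
            adj := fun u w => (N.adj u w ∧ w ≠ z ∧ ¬ (u = p2 ∧ w = v)) ∨ (u = p2 ∧ w = y)
            adjDec := fun u w => inferInstance
            adj_mem := by
              rintro u w (⟨h, h1, _⟩ | ⟨rfl, rfl⟩)
              · refine ⟨Finset.mem_insert_of_mem (Finset.mem_sdiff.mpr
                  ⟨(N.adj_mem u w h).1, ?_⟩),
                  Finset.mem_insert_of_mem (Finset.mem_sdiff.mpr
                  ⟨(N.adj_mem u w h).2, by simp [h1]⟩)⟩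
                simp only [Finset.mem_singleton]
                rintro rfl
                exact outdeg_zero_iff.mp hzout w h
              · exact ⟨Finset.mem_insert_of_mem (Finset.mem_sdiff.mpr
                  ⟨hp2verts, by simp [hp2z]⟩), Finset.mem_insert_self _ _⟩ } with hPdef
        have hPverts : ∀ u, u ∈ P.verts ↔ u = y ∨ (u ∈ N.verts ∧ u ≠ z) := by
          intro u
          simp [hPdef, Finset.mem_sdiff, Finset.mem_insert]
        have hPadj : ∀ u w, P.adj u w ↔
            (N.adj u w ∧ w ≠ z ∧ ¬ (u = p2 ∧ w = v)) ∨ (u = p2 ∧ w = y) := fun u w => Iff.rfl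
        have hvP : v ∈ P.verts := (hPverts v).mpr (Or.inr ⟨hvverts, Ne.symm hzne⟩)
        have hyP : y ∈ P.verts := (hPverts y).mpr (Or.inl rfl)
        have hvout0 : P.outdeg v = 0 := by
          rw [outdeg_zero_iff]
          rintro w (⟨h, h1, _⟩ | ⟨h, _⟩)
          · exact h1 (hzuniq w h)
          · exact hp2ne h.symm
        have hyout0 : P.outdeg y = 0 := by
          rw [outdeg_zero_iff]
          rintro w (⟨h, _, _⟩ | ⟨h, _⟩)
          · exact hy (N.adj_mem y w h).1
          · exact hyp2 h
        -- YMerge P N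
        have hmerge : YMerge P N := by
          refine ⟨v, y, z, p1, p2, Ne.symm hyv, ⟨hvP, hvout0⟩, ⟨hyP, hyout0⟩, ?_,
            ?_, ?_, hp12, ?_, ?_⟩
          · rw [hPverts]
            rintro (h | ⟨_, h⟩)
            · exact hyz h.symm
            · exact h rfl
          · exact Or.inl ⟨hp1v, Ne.symm hzne, fun h => hp12 h.1⟩
          · exact Or.inr ⟨rfl, rfl⟩
          · ext u
            rw [Finset.mem_insert, Finset.mem_sdiff, Finset.mem_singleton, hPverts]
            constructor
            · intro hu
              by_cases huz : u = z
              · exact Or.inl huz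
              · exact Or.inr ⟨Or.inr ⟨hu, huz⟩, fun h => hy (h ▸ hu)⟩
            · rintro (rfl | ⟨h | ⟨h, _⟩, huy⟩)
              · exact hzv
              · exact absurd h huy
              · exact h
          · intro u w
            rw [hPadj]
            constructor
            · intro h
              by_cases hwz : w = z
              · exact Or.inr (Or.inr ⟨hparz u (hwz ▸ h), hwz⟩)
              · by_cases hp : u = p2 ∧ w = v
                · exact Or.inr (Or.inl hp)
                · exact Or.inl ⟨Or.inl ⟨h, hwz, hp⟩, fun hwy => hy (hwy ▸ (N.adj_mem u w h).2)⟩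
            · rintro (⟨⟨h, _, _⟩ | ⟨_, rfl⟩, hwy⟩ | ⟨rfl, rfl⟩ | ⟨rfl, rfl⟩)
              · exact h
              · exact absurd rfl hwy
              · exact hp2v
              · exact hvz
        -- acyclicity of P
        have hnoy : ∀ b, ¬ P.adj y b := fun b h => outdeg_zero_iff.mp hyout0 b h
        have hPac : P.Acyclic := by
          have key : ∀ a b, Relation.TransGen P.adj a b →
              Relation.TransGen N.adj a b ∨ b = y := by
            intro a b h
            induction h with
            | single h =>
              rcases h with ⟨h, _, _⟩ | ⟨_, rfl⟩
              · exact Or.inl (Relation.TransGen.single h)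
              · exact Or.inr rfl
            | tail hb hstep ih2 =>
              rcases ih2 with ih2 | rfl
              · rcases hstep with ⟨h, _, _⟩ | ⟨_, rfl⟩
                · exact Or.inl (ih2.tail h)
                · exact Or.inr rfl
              · exact absurd hstep (hnoy _)
          intro a hcyc
          rcases key a a hcyc with h | rfl
          · exact hac a h
          · obtain ⟨c, h, -⟩ := Relation.TransGen.head'_iff.mp hcyc
            exact hnoy c h
        -- out-degree of p2 is preserved
        have houtp2 : P.outdeg p2 = N.outdeg p2 := by
          set s : Finset ℕ := N.verts.filter (fun t => N.adj p2 t) with hsdef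
          have hvs : v ∈ s := out_mem_iff.mpr hp2v
          have hys : y ∉ s.erase v := fun h => hy (Finset.mem_of_mem_filter y (Finset.mem_of_mem_erase h))
          have hcard : P.outdeg p2 = (insert y (s.erase v)).card := by
            refine outdeg_eq_card (fun t => ?_)
            rw [hPadj, Finset.mem_insert, Finset.mem_erase]
            constructor
            · rintro (⟨h, _, h3⟩ | ⟨_, rfl⟩)
              · exact Or.inr ⟨fun hv' => h3 ⟨rfl, hv'⟩, out_mem_iff.mpr h⟩
              · exact Or.inl rfl
            · rintro (rfl | ⟨htv, hts⟩)
              · exact Or.inr ⟨rfl, rfl⟩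
              · have h := out_mem_iff.mp hts
                refine Or.inl ⟨h, ?_, fun hh => htv hh.2⟩
                rintro rfl
                exact hp2ne (hparz p2 h)
          rw [hcard, Finset.card_insert_of_notMem hys,
            Finset.card_erase_of_mem hvs]
          have : 0 < s.card := Finset.card_pos.mpr ⟨v, hvs⟩
          unfold outdeg
          rw [← hsdef]
          omega
        -- degree congruences away from the modified vertices
        have hincongr : ∀ w, w ≠ z → w ≠ v → w ≠ y → P.indeg w = N.indeg w := by
          intro w h1 h2 h3
          refine indeg_congr (fun u => ?_)
          rw [hPadj]
          constructor
          · rintro (⟨h, _, _⟩ | ⟨_, rfl⟩)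
            · exact h
            · exact absurd rfl h3
          · intro h
            exact Or.inl ⟨h, h1, fun hh => h2 hh.2⟩
        have houtcongr : ∀ w, w ≠ v → w ≠ p2 → P.outdeg w = N.outdeg w := by
          intro w h1 h2
          refine outdeg_congr (fun t => ?_)
          rw [hPadj]
          constructor
          · rintro (⟨h, _, _⟩ | ⟨rfl, _⟩)
            · exact h
            · exact absurd rfl h2
          · intro h
            refine Or.inl ⟨h, ?_, fun hh => h2 hh.1⟩
            rintro rfl
            exact h1 (hparz w h)
        -- P is binary
        have hPbin : P.IsBinary := by
          have hρz : ρ ≠ z := Ne.symm hzρ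
          have hρv' : ρ ≠ v := fun h => hvρ h.symm
          refine ⟨hPac, ρ, ⟨?_, ?_⟩, ?_, ?_, ?_⟩
          · exact (hPverts ρ).mpr (Or.inr ⟨hρv, hρz⟩)
          · rw [indeg_zero_iff]
            rintro u (⟨h, _, _⟩ | ⟨_, h⟩)
            · exact indeg_zero_iff.mp hρin u h
            · exact hyρ h.symm
          · by_cases hρp2 : ρ = p2
            · rw [hρp2] at hρout ⊢
              rw [houtp2]; exact hρout
            · rw [houtcongr ρ hρv' hρp2]; exact hρout
          · -- reachability
            have hto : ∀ w, Relation.ReflTransGen N.adj ρ w → w ≠ z → w ≠ v →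
                Relation.ReflTransGen P.adj ρ w := by
              intro w h
              induction h with
              | refl => intro _ _; exact Relation.ReflTransGen.refl
              | tail hb hstep ih2 =>
                rename_i b w'
                intro hwz hwv
                have hbz : b ≠ z := fun h => outdeg_zero_iff.mp hzout _ (h ▸ hstep)
                have hbv : b ≠ v := fun h => hwz (hzuniq _ (h ▸ hstep))
                exact (ih2 hbz hbv).tail (Or.inl ⟨hstep, hwz, fun hh => hwv hh.2⟩)
            intro w hw
            rw [hPverts] at hw
            rcases hw with rfl | ⟨hwN, hwz⟩
            · exact (hto p2 (hreach p2 hp2verts) hp2z hp2ne).tail (Or.inr ⟨rfl, rfl⟩)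
            · by_cases hwv : w = v
              · subst hwv
                exact (hto p1 (hreach p1 hp1verts) hp1z hp1ne).tail
                  (Or.inl ⟨hp1v, Ne.symm hzne, fun h => hp12 h.1⟩)
              · exact hto w (hreach w hwN) hwz hwv
          · -- degree trichotomy
            intro w hw hwρ
            rw [hPverts] at hw
            rcases hw with rfl | ⟨hwN, hwz⟩
            · -- w = y : leaf
              refine Or.inr (Or.inr ⟨?_, hyout0⟩)
              have : P.indeg w = ({p2} : Finset ℕ).card := by
                refine indeg_eq_card (fun u => ?_)
                rw [hPadj, Finset.mem_singleton]
                constructor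
                · rintro (⟨h, _, _⟩ | ⟨rfl, _⟩)
                  · exact absurd (N.adj_mem u w h).2 hy
                  · rfl
                · rintro rfl
                  exact Or.inr ⟨rfl, rfl⟩
              simpa using this
            · by_cases hwv : w = v
              · -- w = v : leaf
                refine Or.inr (Or.inr ⟨?_, hwv ▸ hvout0⟩)
                subst hwv
                have : P.indeg w = ({p1} : Finset ℕ).card := by
                  refine indeg_eq_card (fun u => ?_)
                  rw [hPadj, Finset.mem_singleton]
                  constructor
                  · rintro (⟨h, _, h3⟩ | ⟨_, h⟩)
                    · rcases hpuniq u h with rfl | rfl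
                      · rfl
                      · exact absurd ⟨rfl, rfl⟩ h3
                    · exact absurd h.symm (fun hh => hyv hh)
                  · rintro rfl
                    exact Or.inl ⟨hp1v, Ne.symm hzne, fun hh => hp12 hh.1⟩
                simpa using this
              · by_cases hwp2 : w = p2
                · subst hwp2
                  rw [hincongr w hwz hwv (fun h => hy (h ▸ hwN)), houtp2]
                  exact hdeg w hwN hwρ
                · rw [hincongr w hwz hwv (fun h => hy (h ▸ hwN)), houtcongr w hwv hwp2]
                  exact hdeg w hwN hwρ
        -- edge count decreases
        have hlt : P.ecount < N.ecount := by
          unfold ecount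
          have hyP' : y ∉ N.verts \ {z} := fun h => hy (Finset.mem_sdiff.mp h).1
          have hsplit : ∑ w ∈ P.verts, P.outdeg w =
              P.outdeg y + ∑ w ∈ N.verts \ {z}, P.outdeg w := by
            rw [hPdef]
            exact Finset.sum_insert hyP'
          have h1 : ∑ w ∈ N.verts \ {z}, P.outdeg w < ∑ w ∈ N.verts \ {z}, N.outdeg w := by
            refine Finset.sum_lt_sum (fun i hi => ?_)
              ⟨v, Finset.mem_sdiff.mpr ⟨hvverts, by simp [Ne.symm hzne]⟩, ?_⟩
            · by_cases hip2 : i = p2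
              · exact le_of_eq (hip2 ▸ houtp2)
              · by_cases hiv : i = v
                · rw [hiv, hvout0]; omega
                · exact le_of_eq (houtcongr i hiv hip2)
            · rw [hvout0, hout1]; omega
          have h2 : ∑ w ∈ N.verts \ {z}, N.outdeg w ≤ ∑ w ∈ N.verts, N.outdeg w :=
            Finset.sum_le_sum_of_subset Finset.sdiff_subset
          rw [hsplit, hyout0]
          omega
        obtain ⟨N₀, hN₀, hchain⟩ := ih P (by omega) hPbin
        exact ⟨N₀, hN₀, hchain.tail (Or.inr hmerge)⟩
      · exact absurd hout0 hvout

end PNet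

open PNet in
/-- Every binary phylogenetic network can be generated (up to isomorphism)
from the single-leaf network by a finite sequence of speciation events and
y-type merging events. -/
theorem stmt7 (N : PNet) (hbin : N.IsBinary) :
    ∃ N₀ M, SingleLeaf N₀ ∧
      Relation.ReflTransGen (fun A B => Speciation A B ∨ YMerge A B) N₀ M ∧
      Iso M N := by
  obtain ⟨N₀, h0, hchain⟩ := PNet.gen_main N.ecount N le_rfl hbin
  exact ⟨N₀, N, h0, hchain, ⟨id, Set.bijOn_id _, fun u v _ _ => Iff.rfl⟩⟩
end

section
/- Every binary phylogenetic network obtained from the single-leaf network by a finite sequence of speciation events and n-type (HGT) reticulation events is an orchard network. -/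
namespace PNet

-- helpers
lemma no_out_of_leaf {N : PNet} {x : ℕ} (h : N.IsLeaf x) : ∀ v, ¬ N.adj x v := by
  intro v hv
  have hm := (N.adj_mem x v hv).2
  have h0 := h.2
  rw [outdeg, Finset.card_eq_zero] at h0
  have : v ∈ N.verts.filter fun w => N.adj x w := Finset.mem_filter.2 ⟨hm, hv⟩
  rw [h0] at this
  exact absurd this (Finset.notMem_empty v)

lemma outdeg_zero {N : PNet} {x : ℕ} (h : ∀ v, ¬ N.adj x v) : N.outdeg x = 0 := by
  rw [outdeg, Finset.card_eq_zero, Finset.filter_eq_empty_iff]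
  exact fun {v} _ => h v

lemma indeg_eq {N : PNet} {v : ℕ} {S : Finset ℕ} (h : ∀ u, N.adj u v ↔ u ∈ S)
    (hS : ∀ u ∈ S, u ∈ N.verts) : N.indeg v = S.card := by
  rw [indeg]
  congr 1
  ext u
  simp only [Finset.mem_filter]
  constructor
  · rintro ⟨-, h2⟩; exact (h u).1 h2
  · intro hu; exact ⟨hS u hu, (h u).2 hu⟩

-- mapping by a permutation
def mapP (π : Equiv.Perm ℕ) (N : PNet) : PNet where
  verts := N.verts.image π
  adj u v := N.adj (π.symm u) (π.symm v)
  adjDec := fun u v => N.adjDec _ _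
  adj_mem u v h := by
    obtain ⟨h1, h2⟩ := N.adj_mem _ _ h
    refine ⟨Finset.mem_image.2 ⟨_, h1, π.apply_symm_apply u⟩,
      Finset.mem_image.2 ⟨_, h2, π.apply_symm_apply v⟩⟩

lemma mapP_adj (π : Equiv.Perm ℕ) (N : PNet) (u v : ℕ) :
    (mapP π N).adj u v ↔ N.adj (π.symm u) (π.symm v) := Iff.rfl

lemma mapP_adj' (π : Equiv.Perm ℕ) (N : PNet) (u v : ℕ) :
    (mapP π N).adj (π u) (π v) ↔ N.adj u v := by
  rw [mapP_adj, π.symm_apply_apply, π.symm_apply_apply]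

lemma mapP_mem (π : Equiv.Perm ℕ) (N : PNet) (v : ℕ) :
    π v ∈ (mapP π N).verts ↔ v ∈ N.verts := by
  simp [mapP, Finset.mem_image, π.injective.eq_iff]

lemma mapP_verts (π : Equiv.Perm ℕ) (N : PNet) : (mapP π N).verts = N.verts.image π := rfl

lemma indeg_mapP (π : Equiv.Perm ℕ) (N : PNet) (v : ℕ) :
    (mapP π N).indeg (π v) = N.indeg v := by
  rw [indeg, indeg, mapP]
  simp only [π.symm_apply_apply]
  rw [Finset.filter_image]
  rw [Finset.card_image_of_injective _ π.injective]
  congr 1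
  ext u
  simp [π.symm_apply_apply]

lemma outdeg_mapP (π : Equiv.Perm ℕ) (N : PNet) (v : ℕ) :
    (mapP π N).outdeg (π v) = N.outdeg v := by
  rw [outdeg, outdeg, mapP]
  simp only [π.symm_apply_apply]
  rw [Finset.filter_image]
  rw [Finset.card_image_of_injective _ π.injective]
  congr 1
  ext u
  simp [π.symm_apply_apply]

lemma isLeaf_mapP (π : Equiv.Perm ℕ) (N : PNet) (v : ℕ) :
    (mapP π N).IsLeaf (π v) ↔ N.IsLeaf v := by
  rw [IsLeaf, IsLeaf, mapP_mem, outdeg_mapP]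

lemma verts_map_sdiff (π : Equiv.Perm ℕ) {A B : PNet} {S : Finset ℕ}
    (h : B.verts = A.verts \ S) :
    (mapP π B).verts = (mapP π A).verts \ S.image π := by
  rw [mapP_verts, mapP_verts, h, Finset.image_sdiff _ _ π.injective]

lemma cherryPick_mapP (π : Equiv.Perm ℕ) {A B : PNet} (h : CherryPick A B) :
    CherryPick (mapP π A) (mapP π B) := by
  obtain ⟨x, y, p, hxy, hlx, hly, hpx, hpy, hbr⟩ := h
  refine ⟨π x, π y, π p, π.injective.ne hxy, (isLeaf_mapP π A x).2 hlx,
    (isLeaf_mapP π A y).2 hly, (mapP_adj' π A p x).2 hpx, (mapP_adj' π A p y).2 hpy, ?_⟩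
  rcases hbr with ⟨h0, hv, hiff⟩ | ⟨q, hq, hv, hiff⟩
  · refine Or.inl ⟨by rw [indeg_mapP]; exact h0, ?_, ?_⟩
    · have := verts_map_sdiff π hv; rwa [Finset.image_singleton] at this
    · intro u v
      rw [mapP_adj, hiff]
      simp only [ne_eq, Equiv.symm_apply_eq, ← mapP_adj]
  · refine Or.inr ⟨π q, (mapP_adj' π A q p).2 hq, ?_, ?_⟩
    · have := verts_map_sdiff π hv
      rwa [Finset.image_insert, Finset.image_singleton] at this
    · intro u v
      rw [mapP_adj, hiff]
      simp only [ne_eq, Equiv.symm_apply_eq, ← mapP_adj]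

lemma retCherryPick_mapP (π : Equiv.Perm ℕ) {A B : PNet} (h : RetCherryPick A B) :
    RetCherryPick (mapP π A) (mapP π B) := by
  obtain ⟨x, y, w, p, hxy, hlx, hly, hwx, hw2, hpw, hpy, hp1, q', hq'p, hq'w, hbr⟩ := h
  refine ⟨π x, π y, π w, π p, π.injective.ne hxy, (isLeaf_mapP π A x).2 hlx,
    (isLeaf_mapP π A y).2 hly, (mapP_adj' π A w x).2 hwx, by rw [indeg_mapP]; exact hw2,
    (mapP_adj' π A p w).2 hpw, (mapP_adj' π A p y).2 hpy, by rw [indeg_mapP]; exact hp1,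
    π q', π.injective.ne hq'p, (mapP_adj' π A q' w).2 hq'w, ?_⟩
  rcases hbr with ⟨h0, hv, hiff⟩ | ⟨q, hq, hv, hiff⟩
  · refine Or.inl ⟨by rw [indeg_mapP]; exact h0, ?_, ?_⟩
    · have := verts_map_sdiff π hv; rwa [Finset.image_singleton] at this
    · intro u v
      rw [mapP_adj, hiff]
      simp only [ne_eq, Equiv.symm_apply_eq, ← mapP_adj]
  · refine Or.inr ⟨π q, (mapP_adj' π A q p).2 hq, ?_, ?_⟩
    · have := verts_map_sdiff π hv
      rwa [Finset.image_insert, Finset.image_singleton] at this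
    · intro u v
      rw [mapP_adj, hiff]
      simp only [ne_eq, Equiv.symm_apply_eq, ← mapP_adj]

lemma trivial_mapP (π : Equiv.Perm ℕ) {T : PNet} (h : IsTrivialNet T) :
    IsTrivialNet (mapP π T) := by
  obtain ⟨r, l, hrl, hv, hiff⟩ := h
  refine ⟨π r, π l, π.injective.ne hrl, ?_, ?_⟩
  · rw [mapP_verts, hv, Finset.image_insert, Finset.image_singleton]
  · intro u v
    rw [mapP_adj, hiff]
    simp only [Equiv.symm_apply_eq]

lemma rtg_mapP (π : Equiv.Perm ℕ) {M T : PNet} (h : Relation.ReflTransGen Reduce M T) :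
    Relation.ReflTransGen Reduce (mapP π M) (mapP π T) := by
  induction h with
  | refl => exact Relation.ReflTransGen.refl
  | tail _ hstep ih =>
      exact ih.tail (hstep.imp (cherryPick_mapP π) (retCherryPick_mapP π))

lemma orchard_mapP (π : Equiv.Perm ℕ) {N : PNet} (h : N.Orchard) : (mapP π N).Orchard := by
  obtain ⟨T, hT, hred⟩ := h
  exact ⟨mapP π T, trivial_mapP π hT, rtg_mapP π hred⟩

def Aux (N : PNet) : Prop := ∀ l, N.IsLeaf l → ∃! q, N.adj q l

def Good (N : PNet) : Prop := SingleLeaf N ∨ (N.Orchard ∧ Aux N)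

lemma spec_good {M N' : PNet} (hg : Good M) (hs : Speciation M N') : Good N' := by
  obtain ⟨x, a, b, hlx, haM, hbM, hab, hV, hA⟩ := hs
  have hxM : x ∈ M.verts := hlx.1
  have hxout := no_out_of_leaf hlx
  have hxa : x ≠ a := fun h => haM (h ▸ hxM)
  have hxb : x ≠ b := fun h => hbM (h ▸ hxM)
  have haV : a ∈ N'.verts := by rw [hV]; exact Finset.mem_insert_self _ _
  have hbV : b ∈ N'.verts := by
    rw [hV]; exact Finset.mem_insert.2 (Or.inr (Finset.mem_insert_self _ _))
  have hMV : ∀ v ∈ M.verts, v ∈ N'.verts := by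
    intro v hv; rw [hV]
    exact Finset.mem_insert.2 (Or.inr (Finset.mem_insert.2 (Or.inr hv)))
  have hxV : x ∈ N'.verts := hMV x hxM
  have hadjxa : N'.adj x a := (hA x a).2 (Or.inr (Or.inl ⟨rfl, rfl⟩))
  have hadjxb : N'.adj x b := (hA x b).2 (Or.inr (Or.inr ⟨rfl, rfl⟩))
  have hla : N'.IsLeaf a := by
    refine ⟨haV, outdeg_zero ?_⟩
    intro v hv
    rcases (hA a v).1 hv with h | ⟨h, -⟩ | ⟨h, -⟩
    · exact haM (M.adj_mem _ _ h).1
    · exact hxa h.symm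
    · exact hxa h.symm
  have hlb : N'.IsLeaf b := by
    refine ⟨hbV, outdeg_zero ?_⟩
    intro v hv
    rcases (hA b v).1 hv with h | ⟨h, -⟩ | ⟨h, -⟩
    · exact hbM (M.adj_mem _ _ h).1
    · exact hxb h.symm
    · exact hxb h.symm
  have hpar_a : ∀ u, N'.adj u a → u = x := by
    intro u hu
    rcases (hA u a).1 hu with h | ⟨h, -⟩ | ⟨-, h⟩
    · exact absurd (M.adj_mem _ _ h).2 haM
    · exact h
    · exact absurd h hab
  have hpar_b : ∀ u, N'.adj u b → u = x := by
    intro u hu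
    rcases (hA u b).1 hu with h | ⟨-, h⟩ | ⟨h, -⟩
    · exact absurd (M.adj_mem _ _ h).2 hbM
    · exact absurd h (Ne.symm hab)
    · exact h
  rcases hg with ⟨v0, hv0, hnone⟩ | ⟨horch, haux⟩
  · -- M is the single leaf
    have hxv : x = v0 := by
      have := hxM; rw [hv0] at this; exact Finset.mem_singleton.1 this
    have hv0' : M.verts = {x} := by rw [hv0, hxv]
    have hmem'' : ∀ u v : ℕ, (u = x ∧ v = a) → u ∈ N'.verts \ {b} ∧ v ∈ N'.verts \ {b} := by
      rintro u v ⟨rfl, rfl⟩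
      exact ⟨Finset.mem_sdiff.2 ⟨hxV, by simpa using hxb⟩,
        Finset.mem_sdiff.2 ⟨haV, by simpa using hab⟩⟩
    set N'' : PNet := ⟨N'.verts \ {b}, fun u v => u = x ∧ v = a,
      fun u v => instDecidableAnd, hmem''⟩ with hN''
    have htriv : IsTrivialNet N'' := by
      refine ⟨x, a, hxa, ?_, fun u v => Iff.rfl⟩
      show N'.verts \ {b} = {x, a}
      ext v
      rw [Finset.mem_sdiff, hV, hv0']
      simp only [Finset.mem_insert, Finset.mem_singleton]
      constructor
      · rintro ⟨rfl | rfl | rfl, h2⟩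
        · exact Or.inr rfl
        · exact absurd rfl h2
        · exact Or.inl rfl
      · rintro (rfl | rfl)
        · exact ⟨Or.inr (Or.inr rfl), hxb⟩
        · exact ⟨Or.inl rfl, hab⟩
    have hind0 : N'.indeg x = 0 := by
      have h : ∀ u, N'.adj u x ↔ u ∈ (∅ : Finset ℕ) := by
        intro u
        simp only [Finset.notMem_empty, iff_false]
        intro hu
        rcases (hA u x).1 hu with h | ⟨-, h⟩ | ⟨-, h⟩
        · exact hnone u x h
        · exact hxa h
        · exact hxb h
      rw [indeg_eq h (by simp)]; rfl
    have hcp : CherryPick N' N'' := by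
      refine ⟨a, b, x, hab, hla, hlb, hadjxa, hadjxb, Or.inl ⟨hind0, rfl, ?_⟩⟩
      intro u v
      show (u = x ∧ v = a) ↔ _
      constructor
      · rintro ⟨rfl, rfl⟩; exact ⟨hadjxa, fun h => hab h⟩
      · rintro ⟨hadj, hvb⟩
        rcases (hA u v).1 hadj with h | ⟨rfl, rfl⟩ | ⟨rfl, rfl⟩
        · exact absurd h (hnone u v)
        · exact ⟨rfl, rfl⟩
        · exact absurd rfl hvb
    refine Or.inr ⟨⟨N'', htriv, Relation.ReflTransGen.single (Or.inl hcp)⟩, ?_⟩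
    intro l hl
    have hlV := hl.1
    rw [hV, hv0'] at hlV
    rcases Finset.mem_insert.1 hlV with rfl | hlV'
    · exact ⟨x, hadjxa, hpar_a⟩
    rcases Finset.mem_insert.1 hlV' with rfl | hlM
    · exact ⟨x, hadjxb, hpar_b⟩
    · rw [Finset.mem_singleton.1 hlM] at hl
      exact absurd hadjxa (no_out_of_leaf hl a)
  · -- M orchard with Aux
    obtain ⟨q, hq, huq⟩ := haux x hlx
    have hqM : q ∈ M.verts := (M.adj_mem _ _ hq).1
    have hqx : q ≠ x := fun h => hxout x (h ▸ hq)
    have hqa : q ≠ a := fun h => haM (h ▸ hqM)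
    have hverts : (mapP (Equiv.swap x a) M).verts = N'.verts \ {b, x} := by
      ext v
      have hmem : v ∈ (mapP (Equiv.swap x a) M).verts ↔ Equiv.swap x a v ∈ M.verts := by
        rw [mapP_verts, Finset.mem_image]
        constructor
        · rintro ⟨w, hw, rfl⟩
          rwa [Equiv.swap_apply_self]
        · intro hm
          exact ⟨_, hm, Equiv.swap_apply_self _ _ _⟩
      rw [hmem, Finset.mem_sdiff, hV]
      simp only [Finset.mem_insert, Finset.mem_singleton]
      by_cases hvx : v = x
      · subst hvx
        rw [Equiv.swap_apply_left]
        simp [haM]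
      by_cases hva : v = a
      · subst hva
        rw [Equiv.swap_apply_right]
        simp [hxM, hab, Ne.symm hxa]
      by_cases hvb : v = b
      · subst hvb
        rw [Equiv.swap_apply_of_ne_of_ne hvx hva]
        simp [hbM]
      · rw [Equiv.swap_apply_of_ne_of_ne hvx hva]
        simp [hvx, hva, hvb]
    have hiff : ∀ u v, (mapP (Equiv.swap x a) M).adj u v ↔
        ((N'.adj u v ∧ u ≠ x ∧ v ≠ x ∧ v ≠ b) ∨ (u = q ∧ v = a)) := by
      intro u v
      rw [mapP_adj, Equiv.symm_swap]
      constructor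
      · intro h
        have hu' := (M.adj_mem _ _ h).1
        have hv' := (M.adj_mem _ _ h).2
        have hux : u ≠ x := by
          rintro rfl; rw [Equiv.swap_apply_left] at hu'; exact haM hu'
        have hvx : v ≠ x := by
          rintro rfl; rw [Equiv.swap_apply_left] at hv'; exact haM hv'
        have hua : u ≠ a := by
          rintro rfl; rw [Equiv.swap_apply_right] at h; exact hxout _ h
        rw [Equiv.swap_apply_of_ne_of_ne hux hua] at h hu'
        by_cases hva : v = a
        · subst hva
          rw [Equiv.swap_apply_right] at h
          exact Or.inr ⟨huq u h, rfl⟩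
        · rw [Equiv.swap_apply_of_ne_of_ne hvx hva] at h hv'
          have hvb : v ≠ b := by rintro rfl; exact hbM hv'
          exact Or.inl ⟨(hA u v).2 (Or.inl h), hux, hvx, hvb⟩
      · rintro (⟨hadj, hux, hvx, hvb⟩ | ⟨rfl, rfl⟩)
        · have hm : M.adj u v := by
            rcases (hA u v).1 hadj with h | ⟨rfl, -⟩ | ⟨rfl, -⟩
            · exact h
            · exact absurd rfl hux
            · exact absurd rfl hux
          have hua : u ≠ a := fun h => haM (h ▸ (M.adj_mem _ _ hm).1)
          have hva : v ≠ a := fun h => haM (h ▸ (M.adj_mem _ _ hm).2)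
          rw [Equiv.swap_apply_of_ne_of_ne hux hua, Equiv.swap_apply_of_ne_of_ne hvx hva]
          exact hm
        · rw [Equiv.swap_apply_of_ne_of_ne hqx hqa, Equiv.swap_apply_right]
          exact hq
    have hcp : CherryPick N' (mapP (Equiv.swap x a) M) :=
      ⟨a, b, x, hab, hla, hlb, hadjxa, hadjxb,
        Or.inr ⟨q, (hA q x).2 (Or.inl hq), hverts, hiff⟩⟩
    obtain ⟨T, hT, hrtg⟩ := orchard_mapP (Equiv.swap x a) horch
    refine Or.inr ⟨⟨T, hT, Relation.ReflTransGen.head (Or.inl hcp) hrtg⟩, ?_⟩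
    intro l hl
    have hlV := hl.1
    rw [hV] at hlV
    rcases Finset.mem_insert.1 hlV with rfl | hlV'
    · exact ⟨x, hadjxa, hpar_a⟩
    rcases Finset.mem_insert.1 hlV' with rfl | hlM
    · exact ⟨x, hadjxb, hpar_b⟩
    · have hlleaf : M.IsLeaf l :=
        ⟨hlM, outdeg_zero fun v hv => no_out_of_leaf hl v ((hA l v).2 (Or.inl hv))⟩
      obtain ⟨ql, hql, huql⟩ := haux l hlleaf
      refine ⟨ql, (hA ql l).2 (Or.inl hql), ?_⟩
      intro u hu
      rcases (hA u l).1 hu with h | ⟨rfl, h⟩ | ⟨rfl, h⟩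
      · exact huql u h
      · rw [h] at hlM; exact absurd hlM haM
      · rw [h] at hlM; exact absurd hlM hbM

lemma hgt_good {M N' : PNet} (hg : Good M) (hs : HGT M N') : Good N' := by
  obtain ⟨x, y, u₀, v₀, px, py, hxy, hlx, hly, hpx, hpy, hu₀, hv₀, huv, hV, hA⟩ := hs
  rcases hg with ⟨v0, hv0, hnone⟩ | ⟨horch, haux⟩
  · exact absurd hpx (hnone px x)
  have hxM : x ∈ M.verts := hlx.1
  have hyM : y ∈ M.verts := hly.1
  have hpxM : px ∈ M.verts := (M.adj_mem _ _ hpx).1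
  have hpyM : py ∈ M.verts := (M.adj_mem _ _ hpy).1
  have hMV : ∀ v ∈ M.verts, v ∈ N'.verts := by
    intro v hv; rw [hV]
    exact Finset.mem_insert.2 (Or.inr (Finset.mem_insert.2 (Or.inr hv)))
  have hu₀V : u₀ ∈ N'.verts := by rw [hV]; exact Finset.mem_insert_self _ _
  have hv₀V : v₀ ∈ N'.verts := by
    rw [hV]; exact Finset.mem_insert.2 (Or.inr (Finset.mem_insert_self _ _))
  have hxu : x ≠ u₀ := fun h => hu₀ (h ▸ hxM)
  have hxv : x ≠ v₀ := fun h => hv₀ (h ▸ hxM)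
  have hyu : y ≠ u₀ := fun h => hu₀ (h ▸ hyM)
  have hyv : y ≠ v₀ := fun h => hv₀ (h ▸ hyM)
  have hpxu : px ≠ u₀ := fun h => hu₀ (h ▸ hpxM)
  have hpyu : py ≠ u₀ := fun h => hu₀ (h ▸ hpyM)
  have hpyv : py ≠ v₀ := fun h => hv₀ (h ▸ hpyM)
  have hxout := no_out_of_leaf hlx
  have hyout := no_out_of_leaf hly
  have hpxx : px ≠ x := fun h => hxout x (h ▸ hpx)
  have hpxy : px ≠ y := fun h => hyout x (h ▸ hpx)
  have hpyy : py ≠ y := fun h => hyout y (h ▸ hpy)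
  have hpyx : py ≠ x := fun h => hxout y (h ▸ hpy)
  obtain ⟨qx, hqx, huqx⟩ := haux x hlx
  have hux : ∀ u, M.adj u x → u = px := fun u hu => (huqx u hu).trans (huqx px hpx).symm
  obtain ⟨qy, hqy, huqy⟩ := haux y hly
  have huy : ∀ u, M.adj u y → u = py := fun u hu => (huqy u hu).trans (huqy py hpy).symm
  have hA1 : N'.adj px u₀ := (hA _ _).2 (Or.inr (Or.inl ⟨rfl, rfl⟩))
  have hA2 : N'.adj py v₀ := (hA _ _).2 (Or.inr (Or.inr (Or.inl ⟨rfl, rfl⟩)))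
  have hA3 : N'.adj u₀ x := (hA _ _).2 (Or.inr (Or.inr (Or.inr (Or.inl ⟨rfl, rfl⟩))))
  have hA4 : N'.adj v₀ y := (hA _ _).2 (Or.inr (Or.inr (Or.inr (Or.inr (Or.inl ⟨rfl, rfl⟩)))))
  have hA5 : N'.adj u₀ v₀ := (hA _ _).2 (Or.inr (Or.inr (Or.inr (Or.inr (Or.inr ⟨rfl, rfl⟩)))))
  have hMadj : ∀ u v, M.adj u v → v ≠ x → v ≠ y → N'.adj u v :=
    fun u v h h1 h2 => (hA _ _).2 (Or.inl ⟨h, h1, h2⟩)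
  have hlx' : N'.IsLeaf x := by
    refine ⟨hMV x hxM, outdeg_zero ?_⟩
    intro v hv
    rcases (hA x v).1 hv with ⟨h, -, -⟩ | ⟨h, -⟩ | ⟨h, -⟩ | ⟨h, -⟩ | ⟨h, -⟩ | ⟨h, -⟩
    · exact hxout v h
    · exact hpxx h.symm
    · exact hpyx h.symm
    · exact hxu h
    · exact hxv h
    · exact hxu h
  have hly' : N'.IsLeaf y := by
    refine ⟨hMV y hyM, outdeg_zero ?_⟩
    intro v hv
    rcases (hA y v).1 hv with ⟨h, -, -⟩ | ⟨h, -⟩ | ⟨h, -⟩ | ⟨h, -⟩ | ⟨h, -⟩ | ⟨h, -⟩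
    · exact hyout v h
    · exact hpxy h.symm
    · exact hpyy h.symm
    · exact hyu h
    · exact hyv h
    · exact hyu h
  have hpar_x : ∀ u, N'.adj u x → u = u₀ := by
    intro u hu
    rcases (hA u x).1 hu with ⟨-, h, -⟩ | ⟨-, h⟩ | ⟨-, h⟩ | ⟨h, -⟩ | ⟨-, h⟩ | ⟨-, h⟩
    · exact absurd rfl h
    · exact absurd h hxu
    · exact absurd h hxv
    · exact h
    · exact absurd h hxy
    · exact absurd h hxv
  have hpar_y : ∀ u, N'.adj u y → u = v₀ := by
    intro u hu
    rcases (hA u y).1 hu with ⟨-, -, h⟩ | ⟨-, h⟩ | ⟨-, h⟩ | ⟨-, h⟩ | ⟨h, -⟩ | ⟨-, h⟩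
    · exact absurd rfl h
    · exact absurd h hyu
    · exact absurd h hyv
    · exact absurd h hxy.symm
    · exact h
    · exact absurd h hyv
  have hpar_v₀ : ∀ u, N'.adj u v₀ ↔ u ∈ ({py, u₀} : Finset ℕ) := by
    intro u
    constructor
    · intro hu
      rcases (hA u v₀).1 hu with ⟨h, -, -⟩ | ⟨-, h⟩ | ⟨h, -⟩ | ⟨-, h⟩ | ⟨-, h⟩ | ⟨h, -⟩
      · exact absurd (M.adj_mem _ _ h).2 hv₀
      · exact absurd h.symm huv
      · simp [h]
      · exact absurd h.symm hxv
      · exact absurd h.symm hyv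
      · simp [h]
    · intro hu
      rcases Finset.mem_insert.1 hu with rfl | hu
      · exact hA2
      · rw [Finset.mem_singleton.1 hu]; exact hA5
  have hindeg_v₀ : N'.indeg v₀ = 2 := by
    rw [indeg_eq hpar_v₀ ?_]
    · exact Finset.card_pair hpyu
    · intro u hu
      rcases Finset.mem_insert.1 hu with rfl | hu
      · exact hMV _ hpyM
      · rw [Finset.mem_singleton.1 hu]; exact hu₀V
  have hpar_u₀ : ∀ u, N'.adj u u₀ ↔ u ∈ ({px} : Finset ℕ) := by
    intro u
    constructor
    · intro hu
      rcases (hA u u₀).1 hu with ⟨h, -, -⟩ | ⟨h, -⟩ | ⟨-, h⟩ | ⟨-, h⟩ | ⟨-, h⟩ | ⟨-, h⟩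
      · exact absurd (M.adj_mem _ _ h).2 hu₀
      · simp [h]
      · exact absurd h huv
      · exact absurd h.symm hxu
      · exact absurd h.symm hyu
      · exact absurd h huv
    · intro hu
      rw [Finset.mem_singleton.1 hu]; exact hA1
  have hindeg_u₀ : N'.indeg u₀ = 1 := by
    rw [indeg_eq hpar_u₀ ?_]
    · exact Finset.card_singleton _
    · intro u hu
      rw [Finset.mem_singleton.1 hu]; exact hMV _ hpxM
  have hverts : M.verts = N'.verts \ {v₀, u₀} := by
    ext v
    rw [Finset.mem_sdiff, hV]
    simp only [Finset.mem_insert, Finset.mem_singleton]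
    constructor
    · intro hv
      refine ⟨Or.inr (Or.inr hv), ?_⟩
      rintro (rfl | rfl)
      · exact hv₀ hv
      · exact hu₀ hv
    · rintro ⟨(rfl | rfl | hv), hne⟩
      · exact absurd (Or.inr rfl) hne
      · exact absurd (Or.inl rfl) hne
      · exact hv
  have hiff : ∀ u v, M.adj u v ↔
      ((N'.adj u v ∧ u ≠ v₀ ∧ v ≠ v₀ ∧ u ≠ u₀ ∧ v ≠ u₀) ∨ (u = py ∧ v = y) ∨ (u = px ∧ v = x)) := by
    intro u v
    constructor
    · intro h
      have hu' := (M.adj_mem _ _ h).1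
      have hv' := (M.adj_mem _ _ h).2
      by_cases hvx : v = x
      · subst hvx; exact Or.inr (Or.inr ⟨hux u h, rfl⟩)
      by_cases hvy : v = y
      · subst hvy; exact Or.inr (Or.inl ⟨huy u h, rfl⟩)
      exact Or.inl ⟨hMadj u v h hvx hvy, fun e => hv₀ (e ▸ hu'), fun e => hv₀ (e ▸ hv'),
        fun e => hu₀ (e ▸ hu'), fun e => hu₀ (e ▸ hv')⟩
    · rintro (⟨hadj, h1, h2, h3, h4⟩ | ⟨rfl, rfl⟩ | ⟨rfl, rfl⟩)
      · rcases (hA u v).1 hadj with ⟨h, -, -⟩ | ⟨-, hb⟩ | ⟨-, hb⟩ | ⟨ha, -⟩ | ⟨ha, -⟩ | ⟨-, hb⟩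
        · exact h
        · exact absurd hb h4
        · exact absurd hb h2
        · exact absurd ha h3
        · exact absurd ha h1
        · exact absurd hb h2
      · exact hpy
      · exact hpx
  have hrc : RetCherryPick N' M :=
    ⟨y, x, v₀, u₀, hxy.symm, hly', hlx', hA4, hindeg_v₀, hA5, hA3,
      by rw [hindeg_u₀], py, hpyu, hA2, Or.inr ⟨px, hA1, hverts, hiff⟩⟩
  obtain ⟨T, hT, hr⟩ := horch
  refine Or.inr ⟨⟨T, hT, Relation.ReflTransGen.head (Or.inr hrc) hr⟩, ?_⟩
  intro l hl
  have hlV := hl.1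
  rw [hV] at hlV
  rcases Finset.mem_insert.1 hlV with rfl | hlV'
  · exact absurd hA3 (no_out_of_leaf hl x)
  rcases Finset.mem_insert.1 hlV' with rfl | hlM
  · exact absurd hA4 (no_out_of_leaf hl y)
  by_cases hlx0 : l = x
  · subst hlx0; exact ⟨u₀, hA3, hpar_x⟩
  by_cases hly0 : l = y
  · subst hly0; exact ⟨v₀, hA4, hpar_y⟩
  have hlleaf : M.IsLeaf l := by
    refine ⟨hlM, outdeg_zero ?_⟩
    intro v hv
    by_cases hvx : v = x
    · subst hvx
      have hlpx : l = px := hux l hv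
      exact no_out_of_leaf hl u₀ (hlpx ▸ hA1)
    by_cases hvy : v = y
    · subst hvy
      have hlpy : l = py := huy l hv
      exact no_out_of_leaf hl v₀ (hlpy ▸ hA2)
    exact no_out_of_leaf hl v (hMadj l v hv hvx hvy)
  obtain ⟨ql, hql, huql⟩ := haux l hlleaf
  have hlu : l ≠ u₀ := fun h => hu₀ (h ▸ hlM)
  have hlv : l ≠ v₀ := fun h => hv₀ (h ▸ hlM)
  refine ⟨ql, hMadj ql l hql hlx0 hly0, ?_⟩
  intro u hu
  rcases (hA u l).1 hu with ⟨h, -, -⟩ | ⟨-, hb⟩ | ⟨-, hb⟩ | ⟨-, hb⟩ | ⟨-, hb⟩ | ⟨-, hb⟩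
  · exact huql u h
  · exact absurd hb hlu
  · exact absurd hb hlv
  · exact absurd hb hlx0
  · exact absurd hb hly0
  · exact absurd hb hlv

lemma good_of_gen {A B : PNet} (h0 : SingleLeaf A)
    (hgen : Relation.ReflTransGen (fun A B => Speciation A B ∨ HGT A B) A B) : Good B := by
  induction hgen with
  | refl => exact Or.inl h0
  | tail _ hstep ih =>
      rcases hstep with h | h
      · exact spec_good ih h
      · exact hgt_good ih h

end PNet

open PNet in
/-- Every binary phylogenetic network obtained from the single-leaf network by
speciation events and n-type (HGT) reticulation events is orchard. -/
theorem stmt8 (N₀ N : PNet) (h0 : SingleLeaf N₀)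
    (hgen : Relation.ReflTransGen (fun A B => Speciation A B ∨ HGT A B) N₀ N)
    (hbin : N.IsBinary) :
    N.Orchard := by
  rcases good_of_gen h0 hgen with ⟨v, hv, hnone⟩ | ⟨horch, -⟩
  · obtain ⟨-, ρ, -, hout, -, -⟩ := hbin
    have h0' : N.outdeg ρ = 0 := outdeg_zero fun w h => hnone ρ w h
    rw [h0'] at hout
    exact absurd hout (by norm_num)
  · exact horch
end
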